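/- arXiv:0911.0979 — 5 statements merged into one kernel-verified Lean document; each statement's English description precedes it below -/
import Mathlib

section
/- In the group Z² * Z presented as ⟨a, b, c | [a,b]⟩, for any integers i, j, k with |i| + |j| ≠ 0 and k ≠ 0, setting t = [aⁱbʲ, cᵏ] = (aⁱbʲ)⁻¹ c⁻ᵏ (aⁱbʲ) cᵏ, the subgroup generated by a, b, and t is isomorphic to Z² * Z; more precisely, ⟨a, b, t⟩ factors as the free product ⟨a, b⟩ * ⟨t⟩ with ⟨a,b⟩ ≅ Z² and ⟨t⟩ ≅ Z. -/
open Monoid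

/-- The commutator convention of the paper: `[u,v] = u⁻¹ v⁻¹ u v`. -/
def pcomm {G : Type*} [Group G] (u v : G) : G := u⁻¹ * v⁻¹ * u * v


open Monoid Monoid.CoprodI Pointwise

namespace PPAux

abbrev PA := Multiplicative (ℤ × ℤ)
abbrev PC := Multiplicative ℤ

abbrev Fam : Bool → Type := fun b => Bool.rec PA PC b

instance famGroup : ∀ b, Group (Fam b) := fun b =>
  Bool.rec (inferInstanceAs (Group PA)) (inferInstanceAs (Group PC)) b

instance famDecEq : ∀ b, DecidableEq (Fam b) := fun b =>
  Bool.rec (inferInstanceAs (DecidableEq PA)) (inferInstanceAs (DecidableEq PC)) b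

abbrev oA (u : PA) : CoprodI Fam := of (M := Fam) (i := false) u
abbrev oC (v : PC) : CoprodI Fam := of (M := Fam) (i := true) v

theorem toList_of_smul {b : Bool} (m : Fam b) (hm : m ≠ 1) (w : Word Fam)
    (hw : w.fstIdx ≠ some b) :
    (of m • w).toList = ⟨b, m⟩ :: w.toList := by
  rw [← Word.cons_eq_smul (m := m) (ls := w) (h1 := hw) (h2 := hm)]
  rfl

theorem exists_tail {b : Bool} {m : Fam b} {rest : List (Σ b, Fam b)} (w : Word Fam)
    (h : w.toList = ⟨b, m⟩ :: rest) :
    ∃ w' : Word Fam, w'.toList = rest ∧ w'.fstIdx ≠ some b ∧ m ≠ 1 ∧ w = of m • w' := by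
  have hm : m ≠ 1 := w.ne_one ⟨b, m⟩ (by rw [h]; exact List.mem_cons_self)
  have hch : (⟨b, m⟩ :: rest).Chain' (fun l l' => l.fst ≠ l'.fst) := h ▸ w.chain_ne
  rw [List.Chain', List.isChain_cons] at hch
  set w' : Word Fam :=
    ⟨rest, fun l hl => w.ne_one l (by rw [h]; exact List.mem_cons_of_mem _ hl), hch.2⟩ with hw'
  have hne : w'.fstIdx ≠ some b := by
    rw [Word.fstIdx_ne_iff]
    intro l hl
    exact hch.1 l hl
  refine ⟨w', rfl, hne, hm, ?_⟩
  apply Word.ext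
  rw [h, toList_of_smul m hm _ hne]

theorem smul_merge {b : Bool} (m m' : Fam b) (w : Word Fam) :
    of m • of m' • w = of (m * m') • w := by
  rw [← mul_smul, ← MonoidHom.map_mul]

theorem smul_one' {b : Bool} {m : Fam b} (hm : m = 1) (w : Word Fam) :
    of m • w = w := by
  rw [hm, MonoidHom.map_one, one_smul]

theorem tlA (u : PA) (hu : u ≠ 1) (w : Word Fam) (hw : w.fstIdx ≠ some false) :
    (oA u • w).toList = ⟨false, u⟩ :: w.toList :=
  toList_of_smul (b := false) u hu w hw

theorem tlC (v : PC) (hv : v ≠ 1) (w : Word Fam) (hw : w.fstIdx ≠ some true) :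
    (oC v • w).toList = ⟨true, v⟩ :: w.toList :=
  toList_of_smul (b := true) v hv w hw

theorem mergeA (u u' : PA) (w : Word Fam) : oA u • oA u' • w = oA (u * u') • w :=
  smul_merge (b := false) u u' w

theorem mergeC (v v' : PC) (w : Word Fam) : oC v • oC v' • w = oC (v * v') • w :=
  smul_merge (b := true) v v' w

theorem oneA {u : PA} (h : u = 1) (w : Word Fam) : oA u • w = w :=
  smul_one' (b := false) h w

theorem oneC {v : PC} (h : v = 1) (w : Word Fam) : oC v • w = w :=
  smul_one' (b := true) h w

theorem exists_tailA {u : PA} {rest : List (Σ b, Fam b)} (w : Word Fam)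
    (h : w.toList = ⟨false, u⟩ :: rest) :
    ∃ w' : Word Fam, w'.toList = rest ∧ w'.fstIdx ≠ some false ∧ u ≠ 1 ∧ w = oA u • w' :=
  exists_tail (b := false) w h

theorem exists_tailC {v : PC} {rest : List (Σ b, Fam b)} (w : Word Fam)
    (h : w.toList = ⟨true, v⟩ :: rest) :
    ∃ w' : Word Fam, w'.toList = rest ∧ w'.fstIdx ≠ some true ∧ v ≠ 1 ∧ w = oC v • w' :=
  exists_tail (b := true) w h

theorem letter_inj {b : Bool} {x y : Fam b} {l l' : List (Σ b, Fam b)}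
    (h : (⟨b, x⟩ : Σ b, Fam b) :: l = ⟨b, y⟩ :: l') : x = y ∧ l = l' := by
  rw [List.cons_eq_cons] at h
  exact ⟨sigma_mk_injective h.1, h.2⟩

theorem letter_cases (l : Σ b, Fam b) :
    (∃ u : PA, l = ⟨false, u⟩) ∨ (∃ v : PC, l = ⟨true, v⟩) := by
  rcases l with ⟨b, x⟩
  cases b
  · exact Or.inl ⟨x, rfl⟩
  · exact Or.inr ⟨x, rfl⟩

theorem fstIdx_eq_of_toList {b : Bool} {m : Fam b} {rest : List (Σ b, Fam b)} {w : Word Fam}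
    (h : w.toList = ⟨b, m⟩ :: rest) : w.fstIdx = some b := by
  rw [Word.fstIdx, h]
  rfl

theorem fstIdx_ne_of_toList {b b' : Bool} {m : Fam b} {rest : List (Σ b, Fam b)} {w : Word Fam}
    (h : w.toList = ⟨b, m⟩ :: rest) (hb : b ≠ b') : w.fstIdx ≠ some b' := by
  rw [fstIdx_eq_of_toList h]
  simpa using hb

theorem fstIdx_ne_of_nil {w : Word Fam} (h : w.toList = []) (b' : Bool) :
    w.fstIdx ≠ some b' := by
  rw [Word.fstIdx, h]
  simp

/-! ### the ping-pong sets -/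

section Sets

variable (g : PA) (d : PC)

def SU (w : Word Fam) : Prop :=
  ∃ (u : PA) (rest : List (Σ b, Fam b)), w.toList = ⟨false, u⟩ :: rest ∧
    ¬(u = g⁻¹ ∧ ∃ (m : ℕ) (rest' : List (Σ b, Fam b)),
        rest = ⟨true, d⁻¹⟩ :: ⟨false, g ^ (m + 1)⟩ :: rest')

def SV (w : Word Fam) : Prop :=
  ∃ (m : ℕ) (rest : List (Σ b, Fam b)),
    w.toList = ⟨true, d⁻¹⟩ :: ⟨false, g ^ (m + 1)⟩ :: rest

def SY (w : Word Fam) : Prop :=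
  ∃ (m : ℕ) (rest : List (Σ b, Fam b)),
    w.toList = ⟨false, g⁻¹⟩ :: ⟨true, d⁻¹⟩ :: ⟨false, g ^ (m + 1)⟩ :: rest

def SZ (w : Word Fam) : Prop :=
  ∃ rest, w.toList = ⟨true, d⁻¹⟩ :: rest ∧
    ∀ (m : ℕ) (rest' : List (Σ b, Fam b)), rest ≠ ⟨false, g ^ (m + 1)⟩ :: rest'

def TT : CoprodI Fam := oA g⁻¹ * oC d⁻¹ * oA g * oC d

end Sets

section Facts

variable {g : PA} {d : PC} (hg : ∀ z : ℤ, g ^ z = 1 → z = 0) (hd : d ≠ 1)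

include hg

theorem hg1 : g ≠ 1 := fun h => one_ne_zero (hg 1 (by simp [h]))

theorem hgp (m : ℕ) : g ^ (m + 1) ≠ 1 := fun h => by
  have := hg ((m + 1 : ℕ) : ℤ) (by rw [zpow_natCast]; exact h)
  omega

theorem hginv (m : ℕ) : g⁻¹ ≠ g ^ (m + 1) := fun h => by
  have h2 : g ^ ((m + 2 : ℕ) : ℤ) = 1 := by
    rw [zpow_natCast, pow_succ, ← h, inv_mul_cancel]
  have := hg _ h2
  omega

omit hg in
theorem hmul (m : ℕ) : g * g ^ (m + 1) = g ^ (m + 2) :=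
  (pow_succ' g (m + 1)).symm

theorem hginvmul {u : PA} (m : ℕ) (h : g⁻¹ * u = g ^ (m + 1)) : u = g ^ (m + 1 + 1) := by
  have h1 : u = g * g ^ (m + 1) := by rw [← h, mul_inv_cancel_left]
  rw [h1, hmul]

omit hg in
theorem hginvone {u : PA} (h : g⁻¹ * u = 1) : u = g ^ (0 + 1) := by
  rw [zero_add, pow_one]
  rwa [inv_mul_eq_one, eq_comm] at h

end Facts

section Maps

variable {g : PA} {d : PC} (hg : ∀ z : ℤ, g ^ z = 1 → z = 0) (hd : d ≠ 1)

theorem TT_smul (x : Word Fam) :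
    TT g d • x = oA g⁻¹ • (oC d⁻¹ • (oA g • (oC d • x))) := by
  simp [TT, mul_smul]

theorem TTinv_smul (x : Word Fam) :
    (TT g d)⁻¹ • x = oC d⁻¹ • (oA g⁻¹ • (oC d • (oA g • x))) := by
  simp [TT, mul_inv_rev, mul_smul]

include hg hd

/-- Any word starting with an `A`-letter is sent into `SY` by `TT`. -/
theorem mapA {w : Word Fam} {u : PA} {rest : List (Σ b, Fam b)}
    (hw : w.toList = ⟨false, u⟩ :: rest) : SY g d (TT g d • w) := by
  have e0 : w.fstIdx ≠ some true := fstIdx_ne_of_toList hw (by decide)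
  have e1 : (oC d • w).toList = ⟨true, d⟩ :: ⟨false, u⟩ :: rest := by
    rw [tlC d hd w e0, hw]
  have e2 : (oA g • oC d • w).toList
      = ⟨false, g⟩ :: ⟨true, d⟩ :: ⟨false, u⟩ :: rest := by
    rw [tlA g (hg1 hg) _ (fstIdx_ne_of_toList e1 (by decide)), e1]
  have e3 : (oC d⁻¹ • oA g • oC d • w).toList
      = ⟨true, d⁻¹⟩ :: ⟨false, g⟩ :: ⟨true, d⟩ :: ⟨false, u⟩ :: rest := by
    rw [tlC d⁻¹ (inv_ne_one.mpr hd) _ (fstIdx_ne_of_toList e2 (by decide)), e2]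
  have e4 : (TT g d • w).toList
      = ⟨false, g⁻¹⟩ :: ⟨true, d⁻¹⟩ :: ⟨false, g⟩ :: ⟨true, d⟩ :: ⟨false, u⟩ :: rest := by
    rw [TT_smul, tlA g⁻¹ (inv_ne_one.mpr (hg1 hg)) _ (fstIdx_ne_of_toList e3 (by decide)), e3]
  exact ⟨0, ⟨true, d⟩ :: ⟨false, u⟩ :: rest, by rw [e4]; norm_num⟩

/-- Words in `SV` are sent into `SY` by `TT`. -/
theorem mapV {w : Word Fam} (h : SV g d w) : SY g d (TT g d • w) := by
  obtain ⟨m, rest, hw⟩ := h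
  obtain ⟨w1, hL1, hF1, -, hweq⟩ := exists_tailC w hw
  obtain ⟨w2, hL2, hF2, -, hw1eq⟩ := exists_tailA w1 hL1
  have c0 : (oA (g ^ (m + 1 + 1)) • w2).toList = ⟨false, g ^ (m + 1 + 1)⟩ :: rest := by
    rw [tlA _ (hgp hg _) _ hF2, hL2]
  have key : TT g d • w = oA g⁻¹ • oC d⁻¹ • oA (g ^ (m + 1 + 1)) • w2 := by
    rw [TT_smul, hweq, mergeC, oneC (mul_inv_cancel d), hw1eq, mergeA, hmul]
  have c1 : (oC d⁻¹ • oA (g ^ (m + 1 + 1)) • w2).toList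
      = ⟨true, d⁻¹⟩ :: ⟨false, g ^ (m + 1 + 1)⟩ :: rest := by
    rw [tlC d⁻¹ (inv_ne_one.mpr hd) _ (fstIdx_ne_of_toList c0 (by decide)), c0]
  have c2 : (TT g d • w).toList
      = ⟨false, g⁻¹⟩ :: ⟨true, d⁻¹⟩ :: ⟨false, g ^ (m + 1 + 1)⟩ :: rest := by
    rw [key, tlA g⁻¹ (inv_ne_one.mpr (hg1 hg)) _ (fstIdx_ne_of_toList c1 (by decide)), c1]
  exact ⟨m + 1, rest, c2⟩

/-- Any word starting with a `C`-letter is sent into `SZ` by `TT⁻¹`. -/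
theorem mapCinv {w : Word Fam} {v : PC} {rest : List (Σ b, Fam b)}
    (hw : w.toList = ⟨true, v⟩ :: rest) : SZ g d ((TT g d)⁻¹ • w) := by
  have e0 : w.fstIdx ≠ some false := fstIdx_ne_of_toList hw (by decide)
  have e1 : (oA g • w).toList = ⟨false, g⟩ :: ⟨true, v⟩ :: rest := by
    rw [tlA g (hg1 hg) w e0, hw]
  have e2 : (oC d • oA g • w).toList
      = ⟨true, d⟩ :: ⟨false, g⟩ :: ⟨true, v⟩ :: rest := by
    rw [tlC d hd _ (fstIdx_ne_of_toList e1 (by decide)), e1]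
  have e3 : (oA g⁻¹ • oC d • oA g • w).toList
      = ⟨false, g⁻¹⟩ :: ⟨true, d⟩ :: ⟨false, g⟩ :: ⟨true, v⟩ :: rest := by
    rw [tlA g⁻¹ (inv_ne_one.mpr (hg1 hg)) _ (fstIdx_ne_of_toList e2 (by decide)), e2]
  have e4 : ((TT g d)⁻¹ • w).toList
      = ⟨true, d⁻¹⟩ :: ⟨false, g⁻¹⟩ :: ⟨true, d⟩ :: ⟨false, g⟩ :: ⟨true, v⟩ :: rest := by
    rw [TTinv_smul, tlC d⁻¹ (inv_ne_one.mpr hd) _ (fstIdx_ne_of_toList e3 (by decide)), e3]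
  refine ⟨_, e4, ?_⟩
  intro m rest' hEq
  exact hginv hg m (letter_inj hEq).1

/-- Words in `SU` are sent into `SZ` by `TT⁻¹`. -/
theorem mapUinv {w : Word Fam} (h : SU g d w) : SZ g d ((TT g d)⁻¹ • w) := by
  obtain ⟨u, rest, hw, hcond⟩ := h
  obtain ⟨w1, hL1, hF1, hu1, hweq⟩ := exists_tailA w hw
  by_cases hu : u = g⁻¹
  case neg =>
    have hgu : g * u ≠ 1 := fun hh => hu (eq_inv_of_mul_eq_one_right hh)
    have key : (TT g d)⁻¹ • w = oC d⁻¹ • oA g⁻¹ • oC d • oA (g * u) • w1 := by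
      rw [TTinv_smul, hweq, mergeA]
    have c0 : (oA (g * u) • w1).toList = ⟨false, g * u⟩ :: rest := by
      rw [tlA _ hgu _ hF1, hL1]
    have c1 : (oC d • oA (g * u) • w1).toList
        = ⟨true, d⟩ :: ⟨false, g * u⟩ :: rest := by
      rw [tlC d hd _ (fstIdx_ne_of_toList c0 (by decide)), c0]
    have c2 : (oA g⁻¹ • oC d • oA (g * u) • w1).toList
        = ⟨false, g⁻¹⟩ :: ⟨true, d⟩ :: ⟨false, g * u⟩ :: rest := by
      rw [tlA g⁻¹ (inv_ne_one.mpr (hg1 hg)) _ (fstIdx_ne_of_toList c1 (by decide)), c1]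
    have c3 : ((TT g d)⁻¹ • w).toList
        = ⟨true, d⁻¹⟩ :: ⟨false, g⁻¹⟩ :: ⟨true, d⟩ :: ⟨false, g * u⟩ :: rest := by
      rw [key, tlC d⁻¹ (inv_ne_one.mpr hd) _ (fstIdx_ne_of_toList c2 (by decide)), c2]
    refine ⟨_, c3, ?_⟩
    intro m rest' hEq
    exact hginv hg m (letter_inj hEq).1
  case pos =>
    subst hu
    have key0 : (TT g d)⁻¹ • w = oC d⁻¹ • oA g⁻¹ • oC d • w1 := by
      rw [TTinv_smul, hweq, mergeA, oneA (mul_inv_cancel g)]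
    rcases rest with - | ⟨l2, rest2⟩
    case nil =>
      have c1 : (oC d • w1).toList = [⟨true, d⟩] := by
        rw [tlC d hd _ (fstIdx_ne_of_nil hL1 _), hL1]
      have c2 : (oA g⁻¹ • oC d • w1).toList = [⟨false, g⁻¹⟩, ⟨true, d⟩] := by
        rw [tlA g⁻¹ (inv_ne_one.mpr (hg1 hg)) _ (fstIdx_ne_of_toList c1 (by decide)), c1]
      have c3 : ((TT g d)⁻¹ • w).toList = [⟨true, d⁻¹⟩, ⟨false, g⁻¹⟩, ⟨true, d⟩] := by
        rw [key0, tlC d⁻¹ (inv_ne_one.mpr hd) _ (fstIdx_ne_of_toList c2 (by decide)), c2]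
      refine ⟨_, c3, ?_⟩
      intro m rest' hEq
      exact hginv hg m (letter_inj hEq).1
    case cons =>
      rcases letter_cases l2 with ⟨u2, rfl⟩ | ⟨q, rfl⟩
      case inl => exact absurd (fstIdx_eq_of_toList hL1) hF1
      case inr =>
        obtain ⟨w2, hL2, hF2, hq1, hw1eq⟩ := exists_tailC w1 hL1
        by_cases hdq : d * q = 1
        case neg =>
          have c1 : (oC (d * q) • w2).toList = ⟨true, d * q⟩ :: rest2 := by
            rw [tlC _ hdq _ hF2, hL2]
          have key : (TT g d)⁻¹ • w = oC d⁻¹ • oA g⁻¹ • oC (d * q) • w2 := by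
            rw [key0, hw1eq, mergeC]
          have c2 : (oA g⁻¹ • oC (d * q) • w2).toList
              = ⟨false, g⁻¹⟩ :: ⟨true, d * q⟩ :: rest2 := by
            rw [tlA g⁻¹ (inv_ne_one.mpr (hg1 hg)) _ (fstIdx_ne_of_toList c1 (by decide)), c1]
          have c3 : ((TT g d)⁻¹ • w).toList
              = ⟨true, d⁻¹⟩ :: ⟨false, g⁻¹⟩ :: ⟨true, d * q⟩ :: rest2 := by
            rw [key, tlC d⁻¹ (inv_ne_one.mpr hd) _ (fstIdx_ne_of_toList c2 (by decide)), c2]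
          refine ⟨_, c3, ?_⟩
          intro m rest' hEq
          exact hginv hg m (letter_inj hEq).1
        case pos =>
          have hqd : q = d⁻¹ := eq_inv_of_mul_eq_one_right hdq
          subst hqd
          have hrest2 : ∀ (m : ℕ) (rest' : List (Σ b, Fam b)),
              rest2 ≠ ⟨false, g ^ (m + 1)⟩ :: rest' := by
            intro m rest' hEq
            exact hcond ⟨rfl, m, rest', by rw [hEq]⟩
          have key1 : (TT g d)⁻¹ • w = oC d⁻¹ • oA g⁻¹ • w2 := by
            rw [key0, hw1eq, mergeC, oneC (mul_inv_cancel d)]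
          rcases rest2 with - | ⟨l3, rest3⟩
          case nil =>
            have c2 : (oA g⁻¹ • w2).toList = [⟨false, g⁻¹⟩] := by
              rw [tlA g⁻¹ (inv_ne_one.mpr (hg1 hg)) _ (fstIdx_ne_of_nil hL2 _), hL2]
            have c3 : ((TT g d)⁻¹ • w).toList = [⟨true, d⁻¹⟩, ⟨false, g⁻¹⟩] := by
              rw [key1, tlC d⁻¹ (inv_ne_one.mpr hd) _ (fstIdx_ne_of_toList c2 (by decide)), c2]
            refine ⟨_, c3, ?_⟩
            intro m rest' hEq
            exact hginv hg m (letter_inj hEq).1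
          case cons =>
            rcases letter_cases l3 with ⟨u2, rfl⟩ | ⟨v2, rfl⟩
            case inr => exact absurd (fstIdx_eq_of_toList hL2) hF2
            case inl =>
              obtain ⟨w3, hL3, hF3, hu2, hw2eq⟩ := exists_tailA w2 hL2
              have hgu2 : g⁻¹ * u2 ≠ 1 := by
                intro hh
                exact hrest2 0 rest3 (by rw [hginvone hh])
              have key : (TT g d)⁻¹ • w = oC d⁻¹ • oA (g⁻¹ * u2) • w3 := by
                rw [key1, hw2eq, mergeA]
              have c2 : (oA (g⁻¹ * u2) • w3).toList = ⟨false, g⁻¹ * u2⟩ :: rest3 := by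
                rw [tlA _ hgu2 _ hF3, hL3]
              have c3 : ((TT g d)⁻¹ • w).toList
                  = ⟨true, d⁻¹⟩ :: ⟨false, g⁻¹ * u2⟩ :: rest3 := by
                rw [key, tlC d⁻¹ (inv_ne_one.mpr hd) _ (fstIdx_ne_of_toList c2 (by decide)), c2]
              refine ⟨_, c3, ?_⟩
              intro m rest' hEq
              have h1 := (letter_inj hEq).1
              exact hrest2 (m + 1) rest' (by rw [hginvmul hg m h1, (letter_inj hEq).2])

omit hd in
/-- Left multiplication by a nontrivial `A`-letter sends `SY` into `SU ∪ SV`. -/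
theorem mapYleft {w : Word Fam} {u : PA} (hu : u ≠ 1) (h : SY g d w) :
    SU g d (oA u • w) ∨ SV g d (oA u • w) := by
  obtain ⟨m, rest, hw⟩ := h
  obtain ⟨w1, hL1, hF1, -, hweq⟩ := exists_tailA w hw
  by_cases hug : u = g
  case pos =>
    have key : oA u • w = w1 := by
      rw [hweq, mergeA, hug, oneA (mul_inv_cancel g)]
    right
    exact ⟨m, rest, by rw [key, hL1]⟩
  case neg =>
    have hne : u * g⁻¹ ≠ 1 := by
      intro hh
      exact hug (by rwa [mul_inv_eq_one] at hh)
    have key : oA u • w = oA (u * g⁻¹) • w1 := by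
      rw [hweq, mergeA]
    have c0 : (oA u • w).toList
        = ⟨false, u * g⁻¹⟩ :: ⟨true, d⁻¹⟩ :: ⟨false, g ^ (m + 1)⟩ :: rest := by
      rw [key, tlA _ hne _ hF1, hL1]
    left
    refine ⟨_, _, c0, ?_⟩
    rintro ⟨hEq, -⟩
    exact hu (mul_right_cancel (b := g⁻¹) (hEq.trans (one_mul g⁻¹).symm))

omit hg hd in
/-- Left multiplication by a nontrivial `A`-letter sends `SZ` into `SU`. -/
theorem mapZleft {w : Word Fam} {u : PA} (hu : u ≠ 1) (h : SZ g d w) :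
    SU g d (oA u • w) := by
  obtain ⟨rest, hw, hcond⟩ := h
  have c0 : (oA u • w).toList = ⟨false, u⟩ :: ⟨true, d⁻¹⟩ :: rest := by
    rw [tlA u hu w (fstIdx_ne_of_toList hw (by decide)), hw]
  refine ⟨_, _, c0, ?_⟩
  rintro ⟨-, m, rest', hEq⟩
  exact hcond m rest' (letter_inj hEq).2

theorem mapPowPos (n : ℕ) {w : Word Fam} (h : SU g d w ∨ SV g d w) :
    SY g d ((TT g d) ^ (n + 1) • w) := by
  induction n with
  | zero =>
    rw [pow_one]
    rcases h with h | h
    · obtain ⟨u, rest, hw, -⟩ := h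
      exact mapA hg hd hw
    · exact mapV hg hd h
  | succ n ih =>
    rw [pow_succ', mul_smul]
    obtain ⟨m, rest, hw⟩ := ih
    exact mapA hg hd hw

theorem mapPowNeg (n : ℕ) {w : Word Fam} (h : SU g d w ∨ SV g d w) :
    SZ g d ((TT g d)⁻¹ ^ (n + 1) • w) := by
  induction n with
  | zero =>
    rw [pow_one]
    rcases h with h | h
    · exact mapUinv hg hd h
    · obtain ⟨m, rest, hw⟩ := h
      exact mapCinv hg hd hw
  | succ n ih =>
    rw [pow_succ', mul_smul]
    obtain ⟨rest, hw, -⟩ := ih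
    exact mapCinv hg hd hw

theorem mapZpow (n : ℤ) (hn : n ≠ 0) {w : Word Fam} (h : SU g d w ∨ SV g d w) :
    SY g d ((TT g d) ^ n • w) ∨ SZ g d ((TT g d) ^ n • w) := by
  rcases n with (n | n)
  · cases n with
    | zero => exact absurd rfl hn
    | succ n =>
      left
      rw [Int.ofNat_eq_coe, zpow_natCast]
      exact mapPowPos hg hd n h
  · right
    rw [zpow_negSucc, ← inv_pow]
    exact mapPowNeg hg hd n h

omit hg hd in
theorem head_idx_ne {x : PA} {v : PC} {l l' : List (Σ b, Fam b)}
    (h : (⟨false, x⟩ : Σ b, Fam b) :: l = ⟨true, v⟩ :: l') : False := by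
  have h2 := congrArg (fun L => (L.head?).map Sigma.fst) h
  simp at h2

omit hg hd in
theorem disjXY {w : Word Fam} (h1 : SU g d w ∨ SV g d w) (h2 : SY g d w ∨ SZ g d w) :
    False := by
  rcases h1 with ⟨u, rest, hw, hcond⟩ | ⟨m, rest, hw⟩ <;>
    rcases h2 with ⟨m', rest', hw'⟩ | ⟨rest', hw', hcond'⟩
  · have h := hw.symm.trans hw'
    obtain ⟨hx, hl⟩ := letter_inj h
    exact hcond ⟨hx, m', rest', hl⟩
  · exact head_idx_ne (hw.symm.trans hw')
  · exact head_idx_ne (hw'.symm.trans hw)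
  · have h := hw'.symm.trans hw
    exact hcond' m rest (letter_inj h).2

theorem wordA_mem : ∃ w : Word Fam, SU g d w ∨ SV g d w := by
  refine ⟨⟨[⟨false, g⟩], ?_, ?_⟩, Or.inl ⟨g, [], rfl, ?_⟩⟩
  · intro l hl
    simp only [List.mem_singleton] at hl
    subst hl
    exact hg1 hg
  · simp
  · rintro ⟨-, m, rest', h⟩
    simp at h

omit hg in
theorem wordC_mem : ∃ w : Word Fam, SY g d w ∨ SZ g d w := by
  refine ⟨⟨[⟨true, d⁻¹⟩], ?_, ?_⟩, Or.inr ⟨[], rfl, ?_⟩⟩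
  · intro l hl
    simp only [List.mem_singleton] at hl
    subst hl
    exact inv_ne_one.mpr hd
  · simp
  · intro m rest' h
    simp at h

end Maps

/-! ### Assembly -/

def e₁ : Coprod PA PC →* CoprodI Fam :=
  Coprod.lift (of (M := Fam) (i := false)) (of (M := Fam) (i := true))

def e₂ : CoprodI Fam →* Coprod PA PC :=
  CoprodI.lift (fun b => Bool.rec (motive := fun b => Fam b →* Coprod PA PC)
    Coprod.inl Coprod.inr b)

theorem e₂_e₁ (x : Coprod PA PC) : e₂ (e₁ x) = x := by
  have h : e₂.comp e₁ = MonoidHom.id _ := by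
    apply Coprod.hom_ext
    · apply MonoidHom.ext
      intro u
      exact lift_of _ _
    · apply MonoidHom.ext
      intro v
      exact lift_of _ _
  calc e₂ (e₁ x) = (e₂.comp e₁) x := rfl
    _ = x := by rw [h]; rfl

theorem e₁_inj : Function.Injective e₁ := fun x y h => by
  rw [← e₂_e₁ x, ← e₂_e₁ y, h]

/-- The homomorphism `Z² * Z → Z² * Z`, `A ↦ A`, generator of `Z` to `t`,
presented as a map out of `CoprodI Fam`. -/
abbrev FF (t : Coprod PA PC) : ∀ b, Fam b →* Coprod PA PC := fun b =>
  Bool.rec (motive := fun b => Fam b →* Coprod PA PC) Coprod.inl (zpowersHom _ t) b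

theorem main_inj {g : PA} {d : PC} (hg : ∀ z : ℤ, g ^ z = 1 → z = 0) (hd : d ≠ 1)
    {t : Coprod PA PC}
    (htt : t = Coprod.inl g⁻¹ * Coprod.inr d⁻¹ * Coprod.inl g * Coprod.inr d) :
    Function.Injective (Coprod.lift (Coprod.inl : PA →* Coprod PA PC) (zpowersHom _ t)) := by
  classical
  have hT : e₁ t = TT g d := by
    rw [htt]
    simp only [map_mul, map_inv]
    rfl
  letI inst : MulAction (Coprod PA PC) (Word Fam) := MulAction.compHom _ e₁
  set X : Bool → Set (Word Fam) := fun b =>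
    Bool.rec {w | SU g d w ∨ SV g d w} {w | SY g d w ∨ SZ g d w} b with hX
  have hcard : (3 : Cardinal) ≤ Cardinal.mk Bool ∨ ∃ b, (3 : Cardinal) ≤ Cardinal.mk (Fam b) := by
    right
    refine ⟨false, ?_⟩
    have h1 : (3 : Cardinal) ≤ Cardinal.aleph0 := by
      exact_mod_cast (Cardinal.nat_lt_aleph0 3).le
    exact h1.trans (Cardinal.aleph0_le_mk PA)
  have hne : ∀ b, (X b).Nonempty := by
    intro b
    cases b
    · obtain ⟨w, hw⟩ := wordA_mem hg (hd := hd)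
      exact ⟨w, hw⟩
    · obtain ⟨w, hw⟩ := wordC_mem hd (g := g)
      exact ⟨w, hw⟩
  have hdisj : Pairwise (Function.onFun Disjoint X) := by
    intro b b' hbb
    cases b <;> cases b'
    · exact absurd rfl hbb
    · exact Set.disjoint_left.mpr fun w hw hw' => disjXY hw hw'
    · exact Set.disjoint_left.mpr fun w hw hw' => disjXY hw' hw
    · exact absurd rfl hbb
  have hpp : Pairwise fun b b' => ∀ h : Fam b, h ≠ 1 → FF t b h • X b' ⊆ X b := by
    intro b b' hbb
    cases b <;> cases b'
    · exact absurd rfl hbb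
    · intro h hne1 x hx
      obtain ⟨w, hw, rfl⟩ := hx
      have hsm : FF t false h • w = oA h • w := rfl
      have hw' : SY g d w ∨ SZ g d w := hw
      have hmem : oA h • w ∈ X false := by
        rcases hw' with hw' | hw'
        · exact mapYleft hg hne1 hw'
        · exact Or.inl (mapZleft hne1 hw')
      exact Set.mem_of_eq_of_mem hsm hmem
    · intro h hne1 x hx
      obtain ⟨w, hw, rfl⟩ := hx
      set n : ℤ := Multiplicative.toAdd (show PC from h) with hn
      have hsm : FF t true h • w = (TT g d) ^ n • w := by
        rw [MulAction.compHom_smul_def]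
        have h2 : e₁ (FF t true h) = e₁ (t ^ n) := rfl
        rw [h2, map_zpow, hT]
      have hid : h = (Multiplicative.ofAdd n : PC) := rfl
      have hn0 : n ≠ 0 := fun h0 => hne1 (by rw [hid, h0]; rfl)
      have hw' : SU g d w ∨ SV g d w := hw
      have hmem : (TT g d) ^ n • w ∈ X true := mapZpow hg hd _ hn0 hw'
      exact Set.mem_of_eq_of_mem hsm hmem
    · exact absurd rfl hbb
  have key : Function.Injective (CoprodI.lift (FF t)) :=
    lift_injective_of_ping_pong _ hcard X hne hdisj hpp
  have hcomp : (Coprod.lift (Coprod.inl : PA →* Coprod PA PC) (zpowersHom _ t))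
      = (CoprodI.lift (FF t)).comp e₁ := by
    apply Coprod.hom_ext
    · apply MonoidHom.ext
      intro u
      exact (lift_of _ _).symm
    · apply MonoidHom.ext
      intro v
      exact (lift_of _ _).symm
  rw [hcomp, MonoidHom.coe_comp]
  exact key.comp e₁_inj

end PPAux

open PPAux in
/-- In `Z² * Z = ⟨a,b,c | [a,b]⟩`, for integers `i j k` with `|i|+|j| ≠ 0`
and `k ≠ 0`, setting `t = [aⁱbʲ, cᵏ]`, the subgroup `⟨a,b,t⟩` factors as
`⟨a,b⟩ * ⟨t⟩ ≅ Z² * Z`: the homomorphism from `Z² * Z` sending `a ↦ a`,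
`b ↦ b`, `c ↦ t` is injective. -/
theorem subgroup_abt_free_product (i j k : ℤ) (hij : |i| + |j| ≠ 0) (hk : k ≠ 0)
    (a b c t : Coprod (Multiplicative (ℤ × ℤ)) (Multiplicative ℤ))
    (ha : a = Coprod.inl (Multiplicative.ofAdd ((1, 0) : ℤ × ℤ)))
    (hb : b = Coprod.inl (Multiplicative.ofAdd ((0, 1) : ℤ × ℤ)))
    (hc : c = Coprod.inr (Multiplicative.ofAdd (1 : ℤ)))
    (ht : t = pcomm (a ^ i * b ^ j) (c ^ k)) :
    Function.Injective
      (Coprod.lift (Coprod.inl : Multiplicative (ℤ × ℤ) →* Coprod (Multiplicative (ℤ × ℤ)) (Multiplicative ℤ))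
        (zpowersHom _ t)) := by
  have hij' : ¬(i = 0 ∧ j = 0) := fun ⟨h1, h2⟩ => hij (by simp [h1, h2])
  have hg : ∀ z : ℤ, (Multiplicative.ofAdd ((i, j) : ℤ × ℤ)) ^ z = 1 → z = 0 := by
    intro z hz
    have h2 : z • ((i, j) : ℤ × ℤ) = 0 := by
      have h3 := congrArg Multiplicative.toAdd hz
      simpa [toAdd_zpow] using h3
    have h4 : z * i = 0 := by
      have := congrArg Prod.fst h2
      simpa [smul_eq_mul] using this
    have h5 : z * j = 0 := by
      have := congrArg Prod.snd h2
      simpa [smul_eq_mul] using this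
    rcases mul_eq_zero.mp h4 with h | h
    · exact h
    · rcases mul_eq_zero.mp h5 with h' | h'
      · exact h'
      · exact absurd ⟨h, h'⟩ hij'
  have hd : (Multiplicative.ofAdd k : Multiplicative ℤ) ≠ 1 := fun h => hk (by simpa using h)
  have hmzl : ∀ (x : Multiplicative (ℤ × ℤ)) (z : ℤ),
      (Coprod.inl x : Coprod (Multiplicative (ℤ × ℤ)) (Multiplicative ℤ)) ^ z
        = Coprod.inl (x ^ z) := fun x z =>
    (map_zpow (Coprod.inl : Multiplicative (ℤ × ℤ) →* Coprod (Multiplicative (ℤ × ℤ)) (Multiplicative ℤ)) x z).symm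
  have hmzr : ∀ (x : Multiplicative ℤ) (z : ℤ),
      (Coprod.inr x : Coprod (Multiplicative (ℤ × ℤ)) (Multiplicative ℤ)) ^ z
        = Coprod.inr (x ^ z) := fun x z =>
    (map_zpow (Coprod.inr : Multiplicative ℤ →* Coprod (Multiplicative (ℤ × ℤ)) (Multiplicative ℤ)) x z).symm
  have hab : a ^ i * b ^ j = Coprod.inl (Multiplicative.ofAdd ((i, j) : ℤ × ℤ)) := by
    rw [ha, hb, hmzl, hmzl, ← map_mul]
    congr 1
    rw [← ofAdd_zsmul, ← ofAdd_zsmul, ← ofAdd_add]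
    congr 1
    simp [Prod.ext_iff]
  have hck : c ^ k = Coprod.inr (Multiplicative.ofAdd k) := by
    rw [hc, hmzr]
    congr 1
    rw [← ofAdd_zsmul]
    simp
  have htt : t = Coprod.inl (Multiplicative.ofAdd ((i, j) : ℤ × ℤ))⁻¹
      * Coprod.inr (Multiplicative.ofAdd k)⁻¹
      * Coprod.inl (Multiplicative.ofAdd ((i, j) : ℤ × ℤ))
      * Coprod.inr (Multiplicative.ofAdd k) := by
    have hil : ∀ x : Multiplicative (ℤ × ℤ),
      (Coprod.inl x : Coprod (Multiplicative (ℤ × ℤ)) (Multiplicative ℤ))⁻¹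
        = Coprod.inl x⁻¹ := fun x =>
    (map_inv (Coprod.inl : Multiplicative (ℤ × ℤ) →* Coprod (Multiplicative (ℤ × ℤ)) (Multiplicative ℤ)) x).symm
    have hir : ∀ x : Multiplicative ℤ,
        (Coprod.inr x : Coprod (Multiplicative (ℤ × ℤ)) (Multiplicative ℤ))⁻¹
          = Coprod.inr x⁻¹ := fun x =>
      (map_inv (Coprod.inr : Multiplicative ℤ →* Coprod (Multiplicative (ℤ × ℤ)) (Multiplicative ℤ)) x).symm
    rw [ht, pcomm, hab, hck, hil, hir]
  exact main_inj hg hd htt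
end

section
/- In the group Z² * Z = ⟨a, b, c | [a,b]⟩, every (a,b,c)-commutator has infinite order and is nontrivial. Here an (a,b,c)-commutator is any element of the form [a^{x₁}b^{y₁}, [a^{x₂}b^{y₂}, ... [a^{xₙ}b^{yₙ}, c^{zₙ}]^{zₙ₋₁} ... ]^{z₁}] with n ≥ 1, |xᵢ| + |yᵢ| ≠ 0 and zᵢ ≠ 0 for all i. -/
open Monoid

/-- `(a,b,c)`-commutators: iterated commutators
`[a^{x₁}b^{y₁}, [a^{x₂}b^{y₂}, … [a^{xₙ}b^{yₙ}, c^{zₙ}]^{zₙ₋₁} … ]^{z₁}]`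
with `|xᵢ| + |yᵢ| ≠ 0` and `zᵢ ≠ 0` for all `i`. -/
inductive IsABCCommutator {G : Type*} [Group G] (a b c : G) : G → Prop
  | base (x y z : ℤ) (hxy : |x| + |y| ≠ 0) (hz : z ≠ 0) :
      IsABCCommutator a b c (pcomm (a ^ x * b ^ y) (c ^ z))
  | step (x y z : ℤ) (t : G) (hxy : |x| + |y| ≠ 0) (hz : z ≠ 0) :
      IsABCCommutator a b c t → IsABCCommutator a b c (pcomm (a ^ x * b ^ y) (t ^ z))

noncomputable section ABCAux

/-- The group ring `ℤ[ℤ²]` (Laurent polynomials in two variables). -/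
abbrev ABCRing := AddMonoidAlgebra ℤ (ℤ × ℤ)

/-- The monomial `s^x t^y` in `ℤ[ℤ²]`. -/
def sg (g : ℤ × ℤ) : ABCRing := AddMonoidAlgebra.single g 1

lemma sg_mul (g h : ℤ × ℤ) : sg g * sg h = sg (g + h) := by
  simp [sg, AddMonoidAlgebra.single_mul_single]

lemma sg_zero : sg 0 = 1 := rfl

/-- Monomials as units of `ℤ[ℤ²]`. -/
def uhom : Multiplicative (ℤ × ℤ) →* ABCRingˣ where
  toFun g := ⟨sg g.toAdd, sg (-g.toAdd), by rw [sg_mul]; simp [sg_zero],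
    by rw [sg_mul]; simp [sg_zero]⟩
  map_one' := by ext; simp [sg_zero]
  map_mul' g h := by ext; simp [sg_mul]

/-- The action of `ℤ²` on (the additive group of) `ℤ[ℤ²]` by monomial multiplication. -/
def ABCφ : Multiplicative (ℤ × ℤ) →* MulAut (Multiplicative ABCRing) where
  toFun g := AddEquiv.toMultiplicative (AddAut.mulLeft (uhom g))
  map_one' := by ext x; simp; rfl
  map_mul' g h := by ext x; simp [mul_assoc]; rfl

lemma ABCφ_apply (g : Multiplicative (ℤ × ℤ)) (m : ABCRing) :
    ABCφ g (Multiplicative.ofAdd m) = Multiplicative.ofAdd (sg g.toAdd * m) := rfl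

/-- The wreath-type product `ℤ[ℤ²] ⋊ ℤ²`. -/
abbrev ABCH := SemidirectProduct (Multiplicative ABCRing) (Multiplicative (ℤ × ℤ)) ABCφ

open SemidirectProduct in
lemma pcomm_inr_inl (g : Multiplicative (ℤ × ℤ)) (m : ABCRing) :
    pcomm (inr g : ABCH) (inl (Multiplicative.ofAdd m)) =
      inl (Multiplicative.ofAdd ((1 - sg (-g.toAdd)) * m)) := by
  have h1 : (inr g⁻¹ : ABCH) * inl (Multiplicative.ofAdd (-m)) * inr g
      = inl (ABCφ g⁻¹ (Multiplicative.ofAdd (-m))) := by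
    rw [inl_aut g⁻¹]; simp
  have h2 : (inl (Multiplicative.ofAdd m) : ABCH)⁻¹ = inl (Multiplicative.ofAdd (-m)) := by
    rw [← map_inv]; rfl
  have h3 : (inr g : ABCH)⁻¹ = inr g⁻¹ := by rw [← map_inv]
  unfold pcomm
  rw [h2, h3, h1, ← map_mul]
  congr 1
  have : (ABCφ g⁻¹) (Multiplicative.ofAdd (-m)) = Multiplicative.ofAdd (sg (-g.toAdd) * (-m)) := by
    rw [ABCφ_apply]; rfl
  rw [this, ← ofAdd_add]
  congr 1
  ring

/-- The image of `c`: the element `1 ∈ ℤ[ℤ²]`. -/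
def fc : Multiplicative ℤ →* Multiplicative ABCRing :=
  AddMonoidHom.toMultiplicative (zmultiplesHom ABCRing (1 : ABCRing))

/-- The representation of `ℤ² * ℤ` in `ℤ[ℤ²] ⋊ ℤ²`. -/
def ABCF : Coprod (Multiplicative (ℤ × ℤ)) (Multiplicative ℤ) →* ABCH :=
  Coprod.lift SemidirectProduct.inr (SemidirectProduct.inl.comp fc)

lemma smul_ne_zero' (z : ℤ) (m : ABCRing) (hz : z ≠ 0) (hm : m ≠ 0) : z • m ≠ 0 := by
  intro h
  apply hm; ext a
  have h2 : (z • m).coeff a = 0 := by rw [h]; rfl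
  rw [AddMonoidAlgebra.coeff_smul_apply, smul_eq_mul, mul_eq_zero] at h2
  simpa using h2.resolve_left hz

lemma one_sub_sg_ne_zero (v : ℤ × ℤ) (hv : v ≠ 0) : (1 : ABCRing) - sg v ≠ 0 := by
  intro h
  have h1 : (1 : ABCRing) = sg v := by linear_combination h
  have h2 : ((1 : ABCRing)).coeff 0 = (sg v).coeff 0 := by rw [h1]
  rw [AddMonoidAlgebra.one_def] at h2
  simp [sg, AddMonoidAlgebra.coeff_single, Finsupp.single_apply, hv.symm] at h2

lemma ofAdd_zpow'' {A : Type*} [AddGroup A] (v : A) (n : ℤ) :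
    (Multiplicative.ofAdd v) ^ n = Multiplicative.ofAdd (n • v) := rfl

lemma ofAdd_npow'' {A : Type*} [AddGroup A] (v : A) (n : ℕ) :
    (Multiplicative.ofAdd v) ^ n = Multiplicative.ofAdd (n • v) := rfl

end ABCAux

/-- In `Z² * Z = ⟨a,b,c | [a,b]⟩`, every `(a,b,c)`-commutator is nontrivial
and has infinite order. -/
theorem abcCommutator_infinite_order
    (a b c : Coprod (Multiplicative (ℤ × ℤ)) (Multiplicative ℤ))
    (ha : a = Coprod.inl (Multiplicative.ofAdd ((1, 0) : ℤ × ℤ)))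
    (hb : b = Coprod.inl (Multiplicative.ofAdd ((0, 1) : ℤ × ℤ)))
    (hc : c = Coprod.inr (Multiplicative.ofAdd (1 : ℤ)))
    (w : Coprod (Multiplicative (ℤ × ℤ)) (Multiplicative ℤ))
    (hw : IsABCCommutator a b c w) :
    w ≠ 1 ∧ ¬ IsOfFinOrder w := by
  -- image of `a^x * b^y`
  have hab : ∀ x y : ℤ, ABCF (a ^ x * b ^ y) = SemidirectProduct.inr (Multiplicative.ofAdd (x, y)) := by
    intro x y
    rw [ha, hb, map_mul, map_zpow, map_zpow]
    rw [show ABCF (Coprod.inl (Multiplicative.ofAdd ((1, 0) : ℤ × ℤ)))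
        = SemidirectProduct.inr (Multiplicative.ofAdd ((1, 0) : ℤ × ℤ)) from
      Coprod.lift_apply_inl _ _ _]
    rw [show ABCF (Coprod.inl (Multiplicative.ofAdd ((0, 1) : ℤ × ℤ)))
        = SemidirectProduct.inr (Multiplicative.ofAdd ((0, 1) : ℤ × ℤ)) from
      Coprod.lift_apply_inl _ _ _]
    have e1 : ∀ (v : ℤ × ℤ) (n : ℤ),
        (SemidirectProduct.inr (Multiplicative.ofAdd v) : ABCH) ^ n
          = SemidirectProduct.inr (Multiplicative.ofAdd (n • v)) := by
      intro v n
      calc (SemidirectProduct.inr (Multiplicative.ofAdd v) : ABCH) ^ n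
          = SemidirectProduct.inr ((Multiplicative.ofAdd v) ^ n) :=
            (map_zpow SemidirectProduct.inr (Multiplicative.ofAdd v) n).symm
        _ = _ := by rw [ofAdd_zpow'']
    rw [e1, e1, ← map_mul, ← ofAdd_add]
    congr 2
    simp [Prod.ext_iff]
  have habne : ∀ x y : ℤ, |x| + |y| ≠ 0 → ((x, y) : ℤ × ℤ) ≠ 0 := by
    intro x y hxy h
    apply hxy
    rw [Prod.ext_iff] at h
    simp at h
    simp [h.1, h.2]
  -- main induction
  have key : ∀ u, IsABCCommutator a b c u →
      ∃ m : ABCRing, m ≠ 0 ∧ ABCF u = SemidirectProduct.inl (Multiplicative.ofAdd m) := by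
    intro u hu
    induction hu with
    | base x y z hxy hz =>
      refine ⟨(1 - sg (-(x, y))) * (z • 1), mul_ne_zero (one_sub_sg_ne_zero _ (by
          simpa using habne x y hxy)) (smul_ne_zero' z 1 hz one_ne_zero), ?_⟩
      have hcz : ABCF (c ^ z) = SemidirectProduct.inl (Multiplicative.ofAdd (z • (1 : ABCRing))) := by
        rw [hc, map_zpow]
        rw [show ABCF (Coprod.inr (Multiplicative.ofAdd (1 : ℤ)))
            = SemidirectProduct.inl (fc (Multiplicative.ofAdd (1 : ℤ))) from
          Coprod.lift_apply_inr _ _ _]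
        rw [← map_zpow]
        congr 1
        rw [show fc (Multiplicative.ofAdd (1 : ℤ)) = Multiplicative.ofAdd ((1 : ℤ) • (1 : ABCRing)) from rfl]
        rw [ofAdd_zpow'']
        congr 1
        rw [smul_smul]
        norm_num
      have : ABCF (pcomm (a ^ x * b ^ y) (c ^ z)) =
          pcomm (ABCF (a ^ x * b ^ y)) (ABCF (c ^ z)) := by
        simp [pcomm, map_mul, map_inv]
      rw [this, hab, hcz, pcomm_inr_inl]
      all_goals rfl
    | step x y z t hxy hz ht ih =>
      obtain ⟨m, hm, hFt⟩ := ih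
      refine ⟨(1 - sg (-(x, y))) * (z • m), mul_ne_zero (one_sub_sg_ne_zero _ (by
          simpa using habne x y hxy)) (smul_ne_zero' z m hz hm), ?_⟩
      have htz : ABCF (t ^ z) = SemidirectProduct.inl (Multiplicative.ofAdd (z • m)) := by
        rw [map_zpow, hFt,
          show (SemidirectProduct.inl (Multiplicative.ofAdd m) : ABCH) ^ z
              = SemidirectProduct.inl ((Multiplicative.ofAdd m) ^ z) from
            (map_zpow _ _ _).symm,
          ofAdd_zpow'']
      have : ABCF (pcomm (a ^ x * b ^ y) (t ^ z)) =
          pcomm (ABCF (a ^ x * b ^ y)) (ABCF (t ^ z)) := by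
        simp [pcomm, map_mul, map_inv]
      rw [this, hab, htz, pcomm_inr_inl]
      all_goals rfl
  obtain ⟨m, hm, hFw⟩ := key w hw
  constructor
  · intro h
    rw [h, map_one] at hFw
    have : Multiplicative.ofAdd m = 1 := SemidirectProduct.inl_injective (by rw [← hFw]; rfl)
    exact hm (by simpa using this)
  · intro hfin
    obtain ⟨n, hn, hpow⟩ := isOfFinOrder_iff_pow_eq_one.mp hfin
    have h1 : ABCF (w ^ n) = 1 := by rw [hpow, map_one]
    rw [map_pow, hFw, ← map_pow] at h1
    have h2 : (Multiplicative.ofAdd m) ^ n = 1 := SemidirectProduct.inl_injective (by rw [h1]; rfl)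
    have h3 : (n : ℤ) • m = 0 := by
      have : Multiplicative.ofAdd ((n : ℤ) • m) = 1 := by
        rw [← ofAdd_zpow'', zpow_natCast]
        exact h2
      simpa using this
    exact smul_ne_zero' (n : ℤ) m (by exact_mod_cast hn.ne') hm h3
end

section
/- Every free product of two nontrivial finite cyclic groups, at least one of order ≥ 3, embeds into the group of homeomorphisms of the Cantor set {0,1}^ℕ. More precisely, given m ≥ 3 and n ≥ 2, there exist subgroups G ≅ Z/m and H ≅ Z/n of Homeo({0,1}^ℕ) such that ⟨G, H⟩ ≅ Z/m * Z/n. -/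
set_option maxHeartbeats 1000000
set_option synthInstance.maxHeartbeats 400000

/-- The group of self-homeomorphisms of a topological space, with
`(f * g) x = f (g x)`. -/
instance homeoGroup {X : Type*} [TopologicalSpace X] : Group (X ≃ₜ X) where
  mul f g := g.trans f
  one := Homeomorph.refl X
  inv := Homeomorph.symm
  mul_assoc _ _ _ := Homeomorph.ext fun _ => rfl
  one_mul _ := Homeomorph.ext fun _ => rfl
  mul_one _ := Homeomorph.ext fun _ => rfl
  inv_mul_cancel f := Homeomorph.ext fun x => f.symm_apply_apply x

/-- The Cantor set `{0,1}^ℕ`. -/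
abbrev Cantor : Type := ℕ → Bool

namespace CantorPingPong

open Fin.NatCast

/-- The natural action of homeomorphisms on the Cantor set. -/
instance : MulAction (Cantor ≃ₜ Cantor) Cantor where
  smul f x := f x
  one_smul _ := rfl
  mul_smul _ _ _ := rfl

lemma smul_def (f : Cantor ≃ₜ Cantor) (x : Cantor) : f • x = f x := rfl

lemma mul_apply (f g : Cantor ≃ₜ Cantor) (x : Cantor) : (f * g) x = f (g x) := rfl

lemma one_apply (x : Cantor) : (1 : Cantor ≃ₜ Cantor) x = x := rfl

/-- A map from a product with a discrete factor is continuous provided each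
section is continuous. -/
lemma continuous_of_discrete_left {X Y Z : Type*} [TopologicalSpace X] [DiscreteTopology X]
    [TopologicalSpace Y] [TopologicalSpace Z] {f : X × Y → Z}
    (h : ∀ x, Continuous fun y => f (x, y)) : Continuous f := by
  refine continuous_iff_continuousAt.2 fun p => ?_
  have h1 : ContinuousAt (fun q : X × Y => f (p.1, q.2)) p :=
    ((h p.1).comp continuous_snd).continuousAt
  refine h1.congr ?_
  have hmem : {q : X × Y | q.1 = p.1} ∈ nhds p := by
    have : IsOpen {q : X × Y | q.1 = p.1} :=
      (isOpen_discrete {p.1}).preimage continuous_fst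
    exact this.mem_nhds rfl
  filter_upwards [hmem] with q hq
  exact congrArg f (Prod.ext hq.symm rfl)

/-- The length of the code word for `k` in the unary prefix code with `m` codewords. -/
def clen (m k : ℕ) : ℕ := if k = m - 1 then m - 1 else k + 1

/-- The encoding map `Fin m × Cantor → Cantor`: prepend the `k`-th codeword of the
complete unary prefix code (padding value `v`, marker value `!v`). -/
def enc (m : ℕ) (v : Bool) (p : Fin m × Cantor) : Cantor := fun j =>
  if j < (p.1 : ℕ) then v
  else if j = (p.1 : ℕ) ∧ (p.1 : ℕ) ≠ m - 1 then !v
  else p.2 (j - clen m (p.1 : ℕ))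

lemma enc_continuous (m : ℕ) (v : Bool) : Continuous (enc m v) := by
  apply continuous_pi
  intro j
  apply continuous_of_discrete_left (f := fun p : Fin m × Cantor => enc m v p j)
  intro k
  simp only [enc]
  split_ifs with h1 h2
  · exact continuous_const
  · exact continuous_const
  · exact continuous_apply _

lemma enc_pad (m : ℕ) (v : Bool) (k : Fin m) (t : Cantor) (j : ℕ) (hj : j < (k : ℕ)) :
    enc m v (k, t) j = v := by
  simp [enc, if_pos hj]

lemma enc_marker (m : ℕ) (v : Bool) (k : Fin m) (t : Cantor) (h : (k : ℕ) ≠ m - 1) :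
    enc m v (k, t) (k : ℕ) = !v := by
  simp only [enc]
  split_ifs with h1 h2
  · exact absurd h1 (lt_irrefl _)
  · rfl
  · simp_all

lemma enc_ge (m : ℕ) (v : Bool) (k : Fin m) (t : Cantor) (j : ℕ)
    (hj : clen m (k : ℕ) ≤ j) : enc m v (k, t) j = t (j - clen m (k : ℕ)) := by
  have hk := k.isLt
  simp only [enc, clen] at hj ⊢
  split_ifs at hj ⊢ <;> first | rfl | omega | (exfalso; omega)

lemma enc_tail (m : ℕ) (v : Bool) (k : Fin m) (t : Cantor) (j : ℕ) :
    enc m v (k, t) (clen m (k : ℕ) + j) = t j := by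
  rw [enc_ge m v k t _ (Nat.le_add_right _ _)]
  congr 1
  omega

lemma enc_fst_lt (m : ℕ) (v : Bool) (k k' : Fin m) (t s : Cantor)
    (h : (k : ℕ) < (k' : ℕ)) : enc m v (k, t) ≠ enc m v (k', s) := by
  intro heq
  have hk : (k : ℕ) ≠ m - 1 := by have := k'.isLt; omega
  have h1 : enc m v (k, t) (k : ℕ) = !v := enc_marker m v k t hk
  have h2 : enc m v (k', s) (k : ℕ) = v := enc_pad m v k' s _ h
  rw [heq, h2] at h1
  exact absurd h1 (by simp)

lemma enc_injective (m : ℕ) (v : Bool) : Function.Injective (enc m v) := by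
  rintro ⟨k, t⟩ ⟨k', s⟩ h
  have hkk : k = k' := by
    by_contra hne
    rcases lt_trichotomy (k : ℕ) (k' : ℕ) with hlt | heq | hgt
    · exact enc_fst_lt m v k k' t s hlt h
    · exact hne (Fin.ext heq)
    · exact enc_fst_lt m v k' k s t hgt h.symm
  subst hkk
  have hts : t = s := by
    funext j
    have h1 := enc_tail m v k t j
    have h2 := enc_tail m v k s j
    rw [h] at h1
    rw [← h1, h2]
  rw [hts]

lemma enc_surjective (m : ℕ) (v : Bool) (hm : 1 ≤ m) : Function.Surjective (enc m v) := by
  classical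
  intro y
  by_cases h : ∃ j, j < m - 1 ∧ y j = !v
  · have hk0lt : Nat.find h < m - 1 := (Nat.find_spec h).1
    have hk0v : y (Nat.find h) = !v := (Nat.find_spec h).2
    refine ⟨(⟨Nat.find h, by omega⟩, fun j => y (Nat.find h + 1 + j)), ?_⟩
    funext j
    have hclen : clen m (Nat.find h) = Nat.find h + 1 := by
      simp only [clen]
      rw [if_neg (by omega)]
    rcases lt_trichotomy j (Nat.find h) with hj | hj | hj
    · rw [enc_pad m v _ _ j (by simpa using hj)]
      have hmin := Nat.find_min h hj
      have hyj : y j ≠ !v := by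
        intro hc
        exact hmin ⟨by omega, hc⟩
      cases v <;> cases hyv : y j <;> simp_all
    · have := enc_marker m v (⟨Nat.find h, by omega⟩ : Fin m)
        (fun i => y (Nat.find h + 1 + i)) (by simp only [Fin.val_mk]; omega)
      simp only [Fin.val_mk] at this
      rw [hj, this, hk0v]
    · rw [enc_ge m v _ _ j (by simp only [Fin.val_mk]; omega)]
      simp only [Fin.val_mk, hclen]
      congr 1
      omega
  · push_neg at h
    refine ⟨(⟨m - 1, by omega⟩, fun j => y (m - 1 + j)), ?_⟩
    funext j
    have hclen : clen m (m - 1) = m - 1 := by simp [clen]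
    rcases lt_or_ge j (m - 1) with hj | hj
    · rw [enc_pad m v _ _ j (by simpa using hj)]
      have hyj := h j hj
      cases v <;> cases hyv : y j <;> simp_all
    · rw [enc_ge m v _ _ j (by simp only [Fin.val_mk, hclen]; omega)]
      simp only [Fin.val_mk, hclen]
      congr 1
      omega

lemma enc_fst_eq_zero (m : ℕ) (v : Bool) (k : Fin m) (t : Cantor)
    (h : enc m v (k, t) 0 = !v) : (k : ℕ) = 0 := by
  by_contra hk
  have hk' : 0 < (k : ℕ) := by omega
  rw [enc_pad m v k t 0 hk'] at h
  exact absurd h.symm (by simp)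

/-- The encoding homeomorphism `Fin m × Cantor ≃ₜ Cantor`. -/
noncomputable def encHomeo (m : ℕ) (v : Bool) (hm : 2 ≤ m) : (Fin m × Cantor) ≃ₜ Cantor :=
  Continuous.homeoOfEquivCompactToT2
    (f := Equiv.ofBijective (enc m v) ⟨enc_injective m v, enc_surjective m v (by omega)⟩)
    (enc_continuous m v)

lemma encHomeo_apply (m : ℕ) (v : Bool) (hm : 2 ≤ m) (p : Fin m × Cantor) :
    encHomeo m v hm p = enc m v p := rfl

/-- The basic rotation homeomorphism of the Cantor set of order `m`. -/
noncomputable def rot (m : ℕ) (v : Bool) (hm : 2 ≤ m) : Cantor ≃ₜ Cantor :=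
  haveI : NeZero m := ⟨by omega⟩
  ((encHomeo m v hm).symm.trans
    ((Homeomorph.prodCongr
      (⟨Equiv.addLeft (1 : Fin m), continuous_of_discreteTopology,
        continuous_of_discreteTopology⟩) (Homeomorph.refl Cantor)).trans
      (encHomeo m v hm)))

lemma rot_pow_apply (m : ℕ) (v : Bool) (hm : 2 ≤ m) (k : ℕ) (x : Cantor) :
    haveI : NeZero m := ⟨by omega⟩
    (rot m v hm ^ k) x =
      encHomeo m v hm (((k : Fin m) + ((encHomeo m v hm).symm x).1,
        ((encHomeo m v hm).symm x).2)) := by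
  haveI : NeZero m := ⟨by omega⟩
  induction k with
  | zero =>
    rw [pow_zero, one_apply, Nat.cast_zero, zero_add]
    rw [show ((((encHomeo m v hm).symm x).1, ((encHomeo m v hm).symm x).2))
      = (encHomeo m v hm).symm x from rfl, Homeomorph.apply_symm_apply]
  | succ k ih =>
    have hr : ∀ y : Cantor, rot m v hm y = encHomeo m v hm
        (1 + ((encHomeo m v hm).symm y).1, ((encHomeo m v hm).symm y).2) := fun _ => rfl
    rw [pow_succ', mul_apply, ih, hr, Homeomorph.symm_apply_apply]
    congr 1
    refine Prod.ext ?_ rfl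
    show 1 + ((k : Fin m) + _) = _
    rw [Nat.cast_add, Nat.cast_one]
    abel

lemma rot_pow_self (m : ℕ) (v : Bool) (hm : 2 ≤ m) : rot m v hm ^ m = 1 := by
  haveI : NeZero m := ⟨by omega⟩
  refine Homeomorph.ext fun x => ?_
  rw [rot_pow_apply m v hm m x, one_apply, Fin.natCast_self, zero_add]
  rw [show ((((encHomeo m v hm).symm x).1, ((encHomeo m v hm).symm x).2))
    = (encHomeo m v hm).symm x from rfl, Homeomorph.apply_symm_apply]

lemma rot_pow_moves (m : ℕ) (v : Bool) (hm : 2 ≤ m) (k : ℕ) (hk0 : 0 < k) (hk : k < m)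
    (x : Cantor) (hx : x 0 = !v) : (rot m v hm ^ k) x 0 = v := by
  haveI : NeZero m := ⟨by omega⟩
  set p := (encHomeo m v hm).symm x with hp
  have hxp : enc m v p = x := by
    rw [hp, ← encHomeo_apply m v hm, Homeomorph.apply_symm_apply]
  have hfst : (p.1 : ℕ) = 0 := by
    apply enc_fst_eq_zero m v p.1 p.2
    rw [show ((p.1, p.2) : Fin m × Cantor) = p from rfl, hxp, hx]
  have hfst' : p.1 = 0 := Fin.ext (by simpa using hfst)
  rw [rot_pow_apply m v hm k x, ← hp, hfst', add_zero, encHomeo_apply]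
  apply enc_pad
  rwa [Fin.val_natCast, Nat.mod_eq_of_lt hk]

/-- The homomorphism `Multiplicative (ZMod m) →* Homeo(Cantor)` generated by `rot`. -/
noncomputable def rotHom (m : ℕ) (v : Bool) (hm : 2 ≤ m) :
    Multiplicative (ZMod m) →* (Cantor ≃ₜ Cantor) :=
  haveI : NeZero m := ⟨by omega⟩
  { toFun := fun x => rot m v hm ^ (Multiplicative.toAdd x).val
    map_one' := by
      simp only [toAdd_one, ZMod.val_zero, pow_zero]
    map_mul' := fun x y => by
      haveI : NeZero m := ⟨by omega⟩
      simp only [toAdd_mul]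
      rw [ZMod.val_add, ← pow_eq_pow_mod _ (rot_pow_self m v hm), pow_add] }

lemma rotHom_apply (m : ℕ) (v : Bool) (hm : 2 ≤ m) (x : Multiplicative (ZMod m)) :
    rotHom m v hm x = rot m v hm ^ (Multiplicative.toAdd x).val := rfl

lemma rotHom_moves (m : ℕ) (v : Bool) (hm : 2 ≤ m) (h : Multiplicative (ZMod m))
    (hh : h ≠ 1) (x : Cantor) (hx : x 0 = !v) : (rotHom m v hm h) x 0 = v := by
  haveI : NeZero m := ⟨by omega⟩
  rw [rotHom_apply]
  have hne : (Multiplicative.toAdd h) ≠ 0 := by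
    intro hc
    apply hh
    have := congrArg Multiplicative.ofAdd hc
    simpa using this
  have hval0 : 0 < (Multiplicative.toAdd h).val := by
    rcases Nat.eq_zero_or_pos (Multiplicative.toAdd h).val with h0 | h0
    · exact absurd ((ZMod.val_eq_zero _).1 h0) hne
    · exact h0
  exact rot_pow_moves m v hm _ hval0 (ZMod.val_lt _) x hx

/-- The indexing family for the binary free product as an indexed free product. -/
def Fam (m n : ℕ) : Bool → Type := fun b =>
  match b with
  | true => Multiplicative (ZMod m)
  | false => Multiplicative (ZMod n)

instance famGroup (m n : ℕ) : ∀ b, Group (Fam m n b)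
  | true => inferInstanceAs (Group (Multiplicative (ZMod m)))
  | false => inferInstanceAs (Group (Multiplicative (ZMod n)))

open Pointwise in
theorem coprodI_embeds (m n : ℕ) (hm : 3 ≤ m) (hn : 2 ≤ n) :
    Function.Injective (Monoid.CoprodI.lift
      ((fun b => match b with
        | true => rotHom m false (by omega)
        | false => rotHom n true hn) : ∀ b, Fam m n b →* (Cantor ≃ₜ Cantor))) := by
  haveI : NeZero m := ⟨by omega⟩
  classical
  refine Monoid.CoprodI.lift_injective_of_ping_pong _ ?_
    (fun b : Bool => {x : Cantor | x 0 = !b}) ?_ ?_ ?_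
  · -- cardinality
    right
    refine ⟨true, ?_⟩
    have h1 : Cardinal.mk (Fam m n true) = Cardinal.mk (ZMod m) :=
      Cardinal.mk_congr (Multiplicative.toAdd)
    rw [h1, Cardinal.mk_fintype, ZMod.card]
    exact_mod_cast hm
  · -- nonempty
    intro b
    exact ⟨fun _ => !b, rfl⟩
  · -- disjoint
    intro i j hij
    rw [Function.onFun, Set.disjoint_left]
    intro x hx1 hx2
    simp only [Set.mem_setOf_eq] at hx1 hx2
    exact hij (by cases i <;> cases j <;> simp_all)
  · -- ping pong
    intro i j hij h hh1 y hy
    rw [Set.mem_smul_set] at hy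
    obtain ⟨x, hx, rfl⟩ := hy
    simp only [Set.mem_setOf_eq] at hx ⊢
    cases i
    · cases j
      · exact absurd rfl hij
      · -- i = false (the n-factor), j = true
        rw [smul_def]
        have := rotHom_moves n true hn h hh1 x (by simpa using hx)
        exact this
    · cases j
      · -- i = true (the m-factor), j = false
        rw [smul_def]
        have := rotHom_moves m false (by omega : 2 ≤ m) h hh1 x (by simpa using hx)
        exact this
      · exact absurd rfl hij

end CantorPingPong

open CantorPingPong in
/-- Every free product `Z/m * Z/n` of two nontrivial finite cyclic groups
with `m ≥ 3` and `n ≥ 2` embeds into the group of homeomorphisms of the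
Cantor set: there is an injective homomorphism
`Z/m * Z/n → Homeo({0,1}^ℕ)` (whose restrictions to the factors give
subgroups `G ≅ Z/m`, `H ≅ Z/n` with `⟨G, H⟩ ≅ Z/m * Z/n`). -/
theorem cyclic_free_product_embeds_homeo_cantor (m n : ℕ) (hm : 3 ≤ m) (hn : 2 ≤ n) :
    ∃ φ : Monoid.Coprod (Multiplicative (ZMod m)) (Multiplicative (ZMod n)) →*
        (Cantor ≃ₜ Cantor),
      Function.Injective φ := by
  classical
  -- the embedding of the binary coproduct into the indexed coproduct
  set ε : Monoid.Coprod (Multiplicative (ZMod m)) (Multiplicative (ZMod n)) →*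
      Monoid.CoprodI (Fam m n) :=
    Monoid.Coprod.lift
      (Monoid.CoprodI.of (i := true) : Fam m n true →* Monoid.CoprodI (Fam m n))
      (Monoid.CoprodI.of (i := false) : Fam m n false →* Monoid.CoprodI (Fam m n))
    with hε_def
  -- the retraction
  set ρ : Monoid.CoprodI (Fam m n) →*
      Monoid.Coprod (Multiplicative (ZMod m)) (Multiplicative (ZMod n)) :=
    Monoid.CoprodI.lift ((fun b => match b with
      | true => Monoid.Coprod.inl
      | false => Monoid.Coprod.inr) :
        ∀ b, Fam m n b →* Monoid.Coprod (Multiplicative (ZMod m)) (Multiplicative (ZMod n)))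
    with hρ_def
  have hρε : ∀ x, ρ (ε x) = x := by
    intro x
    have hcomp : ρ.comp ε = MonoidHom.id _ := by
      apply Monoid.Coprod.hom_ext
      · ext y
        simp only [hε_def, hρ_def, MonoidHom.comp_apply, MonoidHom.id_apply,
          Monoid.Coprod.lift_apply_inl]
        exact Monoid.CoprodI.lift_of
          ((fun b => match b with
            | true => Monoid.Coprod.inl
            | false => Monoid.Coprod.inr) :
              ∀ b, Fam m n b →* Monoid.Coprod (Multiplicative (ZMod m)) (Multiplicative (ZMod n)))
          (i := true) y
      · ext y
        simp only [hε_def, hρ_def, MonoidHom.comp_apply, MonoidHom.id_apply,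
          Monoid.Coprod.lift_apply_inr]
        exact Monoid.CoprodI.lift_of
          ((fun b => match b with
            | true => Monoid.Coprod.inl
            | false => Monoid.Coprod.inr) :
              ∀ b, Fam m n b →* Monoid.Coprod (Multiplicative (ZMod m)) (Multiplicative (ZMod n)))
          (i := false) y
    calc ρ (ε x) = (ρ.comp ε) x := rfl
    _ = x := by rw [hcomp]; rfl
  have hεinj : Function.Injective ε := Function.LeftInverse.injective hρε
  have hψ := coprodI_embeds m n hm hn
  exact ⟨(Monoid.CoprodI.lift
      ((fun b => match b with
        | true => rotHom m false (by omega)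
        | false => rotHom n true hn) : ∀ b, Fam m n b →* (Cantor ≃ₜ Cantor))).comp ε,
    hψ.comp hεinj⟩
end

section
/- Let X be a topological space and let g, h be commuting homeomorphisms of X, each with finitely many 'important points' in the following sense: for g, the set I(g) of points p such that p is fixed by g and g is (locally) a non-identity contraction or expansion at p, and assume I(g) and I(h) are finite, and that the closure of Supp(g) equals Supp(g) ∪ I(g) (similarly for h). Then I(g) ∩ closure(Supp(h)) ⊆ I(h); consequently I(g) ∩ I(h) = I(g) ∩ closure(Supp(h)) = I(h) ∩ closure(Supp(g)). -/
/-- Preservation of important points (Lemma 2.7 of the paper).  Here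
`I f` is the (finite) set of important points of a homeomorphism `f`:
fixed points of `f` such that `closure (Supp f) = Supp f ∪ I f`, and `I`
transforms naturally under conjugation, `I (f^u) = I(f)·u` (with
left-application conventions, `I (u⁻¹ * f * u) = ⇑u⁻¹ '' I f`).  If `g`
and `h` commute and admit no nontrivial finite orbits, then
`I(g) ∩ I(h) = I(g) ∩ closure(Supp h) = I(h) ∩ closure(Supp g)`. -/
theorem important_point_preservation {X : Type*} [TopologicalSpace X]
    (I : (X ≃ₜ X) → Set X)
    (hfin : ∀ f : X ≃ₜ X, (I f).Finite)
    (hfix : ∀ f : X ≃ₜ X, ∀ x ∈ I f, f x = x)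
    (hcl : ∀ f : X ≃ₜ X, closure {x | f x ≠ x} = {x | f x ≠ x} ∪ I f)
    (hconj : ∀ f u : X ≃ₜ X, I (u⁻¹ * f * u) = ⇑u⁻¹ '' I f)
    (g h : X ≃ₜ X) (hcomm : g * h = h * g)
    (hg : ∀ p : X, ({x | ∃ k : ℤ, x = (g ^ k) p}).Finite → g p = p)
    (hh : ∀ p : X, ({x | ∃ k : ℤ, x = (h ^ k) p}).Finite → h p = p) :
    I g ∩ closure {x | h x ≠ x} = I g ∩ I h ∧
    I h ∩ closure {x | g x ≠ x} = I g ∩ I h := by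
  have inva : ∀ a b : X ≃ₜ X, a * b = b * a → ∀ (k : ℤ) (p : X), p ∈ I a →
      (b ^ k) p ∈ I a := by
    intro a b hab k p hp
    have hc : Commute a b := hab
    have hck : a * b ^ k = b ^ k * a := (hc.zpow_right k).eq
    have h1 : (b ^ (-k))⁻¹ * a * (b ^ (-k)) = a := by
      rw [zpow_neg, inv_inv, ← hck, mul_assoc, mul_inv_cancel, mul_one]
    have h2 := hconj a (b ^ (-k))
    rw [h1] at h2
    have h3 : (b ^ (-k))⁻¹ = b ^ k := by rw [zpow_neg, inv_inv]
    rw [h3] at h2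
    rw [h2]
    exact ⟨p, hp, rfl⟩
  have main : ∀ a b : X ≃ₜ X, a * b = b * a →
      (∀ p : X, ({x | ∃ k : ℤ, x = (b ^ k) p}).Finite → b p = p) →
      I a ∩ closure {x | b x ≠ x} = I a ∩ I b := by
    intro a b hab hb
    ext p
    simp only [Set.mem_inter_iff]
    constructor
    · rintro ⟨hpa, hpc⟩
      refine ⟨hpa, ?_⟩
      rw [hcl b] at hpc
      rcases hpc with hsupp | hIb
      · exfalso
        apply hsupp
        apply hb
        apply Set.Finite.subset (hfin a)
        rintro x ⟨k, rfl⟩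
        exact inva a b hab k p hpa
      · exact hIb
    · rintro ⟨hpa, hpb⟩
      refine ⟨hpa, ?_⟩
      rw [hcl b]
      exact Or.inr hpb
  refine ⟨main g h hcomm hh, ?_⟩
  rw [Set.inter_comm (I g) (I h)]
  exact main h g hcomm.symm hg
end

section
/- PSL(2,Z) is isomorphic to the free product Z/2 * Z/3, and hence (by the ping-pong construction for demonstrative cyclic groups) embeds into the group of homeomorphisms of the Cantor set: there exist homeomorphisms g, h of {0,1}^ℕ with g² = id, h³ = id, and ⟨g,h⟩ ≅ Z/2 * Z/3. -/
noncomputable section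

open Matrix MatrixGroups

namespace PSLAux

abbrev IrrReal : Type := {x : ℝ // Irrational x}

lemma denom_ne_zero {c d : ℤ} {x : ℝ} (hx : Irrational x) (h : ¬(c = 0 ∧ d = 0)) :
    (c : ℝ) * x + d ≠ 0 := by
  rcases eq_or_ne c 0 with hc | hc
  · have hd : d ≠ 0 := fun hd => h ⟨hc, hd⟩
    subst hc
    simpa using (by exact_mod_cast hd : (d : ℝ) ≠ 0)
  · intro h0
    have hcR : (c : ℝ) ≠ 0 := by exact_mod_cast hc
    have hxq : x = ((-d : ℤ) : ℝ) / ((c : ℤ) : ℝ) := by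
      push_cast
      field_simp
      linarith
    exact (irrational_iff_ne_rational x).mp hx (-d) c hc hxq

lemma row_ne_zero {a b c d : ℤ} (hdet : a * d - b * c = 1) : ¬(c = 0 ∧ d = 0) := by
  rintro ⟨rfl, rfl⟩; simp at hdet

lemma moebius_irrational {a b c d : ℤ} (hdet : a * d - b * c = 1) {x : ℝ}
    (hx : Irrational x) :
    Irrational (((a : ℝ) * x + b) / ((c : ℝ) * x + d)) := by
  have hden : (c : ℝ) * x + d ≠ 0 := denom_ne_zero hx (row_ne_zero hdet)
  rw [irrational_iff_ne_rational]
  intro p q _ heq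
  rcases eq_or_ne q 0 with hq | hq
  · subst hq
    rw [Int.cast_zero, div_zero] at heq
    have hnum : (a : ℝ) * x + b = 0 := by
      rcases div_eq_zero_iff.mp heq with h | h
      · exact h
      · exact absurd h hden
    rcases eq_or_ne a 0 with ha | ha
    · have hb : b ≠ 0 := by rintro rfl; subst ha; simp at hdet
      subst ha
      simp only [Int.cast_zero, zero_mul, zero_add] at hnum
      exact hb (by exact_mod_cast hnum)
    · exact denom_ne_zero hx (fun hh => ha hh.1) hnum
  · have hqR : (q : ℝ) ≠ 0 := by exact_mod_cast hq
    have hcross : ((a : ℝ) * x + b) * q = p * ((c : ℝ) * x + d) := by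
      rw [div_eq_div_iff hden hqR] at heq
      linarith [heq]
    rcases eq_or_ne (a * q - p * c) 0 with hk | hk
    · -- then also b*q = p*d, so q * det = 0, contradiction
      have hkR : (a : ℝ) * q - p * c = 0 := by exact_mod_cast hk
      have hbq : (b : ℝ) * q = p * d := by linear_combination hcross - x * hkR
      have hbqZ : b * q = p * d := by exact_mod_cast hbq
      have : q * (a * d - b * c) = 0 := by linear_combination d * hk - c * hbqZ
      rw [hdet, mul_one] at this
      exact hq this
    · have hkR : ((a * q - p * c : ℤ) : ℝ) ≠ 0 := by exact_mod_cast hk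
      apply (irrational_iff_ne_rational x).mp hx (p * d - q * b) (a * q - p * c) hk
      push_cast at hkR ⊢
      rw [eq_div_iff hkR]
      nlinarith [hcross]

lemma sl_row_ne_zero (g : SL(2, ℤ)) : ¬(g.1 1 0 = 0 ∧ g.1 1 1 = 0) := by
  apply row_ne_zero (a := g.1 0 0) (b := g.1 0 1)
  have := g.2
  rw [Matrix.det_fin_two] at this
  linarith

lemma sl_det (g : SL(2, ℤ)) : g.1 0 0 * g.1 1 1 - g.1 0 1 * g.1 1 0 = 1 := by
  have := g.2
  rw [Matrix.det_fin_two] at this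
  linarith

/-- Möbius action of `SL(2,ℤ)` on irrational reals. -/
instance : MulAction SL(2, ℤ) IrrReal where
  smul g x := ⟨((g.1 0 0 : ℝ) * x + g.1 0 1) / ((g.1 1 0 : ℝ) * x + g.1 1 1),
    moebius_irrational (sl_det g) x.2⟩
  one_smul x := by
    apply Subtype.ext
    show ((((1 : SL(2,ℤ)).1 0 0 : ℝ)) * x + _) / _ = (x : ℝ)
    norm_num [Matrix.SpecialLinearGroup.coe_one, Matrix.one_apply]
  mul_smul g h x := by
    apply Subtype.ext
    obtain ⟨x, hx⟩ := x
    have Hh : ((h.1 1 0 : ℝ)) * x + h.1 1 1 ≠ 0 := denom_ne_zero hx (sl_row_ne_zero h)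
    set y : ℝ := ((h.1 0 0 : ℝ) * x + h.1 0 1) / ((h.1 1 0 : ℝ) * x + h.1 1 1) with hy
    have hyirr : Irrational y := moebius_irrational (sl_det h) hx
    have Hg : ((g.1 1 0 : ℝ)) * y + g.1 1 1 ≠ 0 := denom_ne_zero hyirr (sl_row_ne_zero g)
    have Hgh : (((g * h).1 1 0 : ℝ)) * x + (g * h).1 1 1 ≠ 0 :=
      denom_ne_zero hx (sl_row_ne_zero (g * h))
    show (((g * h).1 0 0 : ℝ) * x + (g * h).1 0 1) / (((g * h).1 1 0 : ℝ) * x + (g * h).1 1 1)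
        = ((g.1 0 0 : ℝ) * y + g.1 0 1) / ((g.1 1 0 : ℝ) * y + g.1 1 1)
    have hent : ∀ i j, ((g * h).1 i j : ℝ)
        = (g.1 i 0 : ℝ) * (h.1 0 j : ℝ) + (g.1 i 1 : ℝ) * (h.1 1 j : ℝ) := by
      intro i j
      rw [Matrix.SpecialLinearGroup.coe_mul, Matrix.mul_apply, Fin.sum_univ_two]
      push_cast
      ring
    rw [hent, hent, hent, hent] at *
    have hyx : y * ((h.1 1 0 : ℝ) * x + h.1 1 1) = (h.1 0 0 : ℝ) * x + h.1 0 1 := by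
      rw [hy]; exact div_mul_cancel₀ _ Hh
    rw [div_eq_div_iff Hgh Hg]
    linear_combination ((g.1 0 1 : ℝ) * g.1 1 0 - g.1 0 0 * g.1 1 1) * hyx

lemma smul_coe (g : SL(2, ℤ)) (x : IrrReal) :
    ((g • x : IrrReal) : ℝ)
      = ((g.1 0 0 : ℝ) * x + g.1 0 1) / ((g.1 1 0 : ℝ) * x + g.1 1 1) := rfl

end PSLAux

namespace PSLAux

open Matrix.SpecialLinearGroup ModularGroup

lemma center_smul_eq {g : SL(2, ℤ)} (hg : g ∈ Subgroup.center (SL(2, ℤ))) (x : IrrReal) :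
    g • x = x := by
  obtain ⟨r, hr2, hrs⟩ := Matrix.SpecialLinearGroup.mem_center_iff.mp hg
  have hru : IsUnit r := IsUnit.of_pow_eq_one (n := 2) (by simpa using hr2) two_ne_zero
  have hent : ∀ i j, g.1 i j = if i = j then r else 0 := by
    intro i j
    rw [← hrs, Matrix.scalar_apply]
    rw [Matrix.diagonal_apply]
  apply Subtype.ext
  rw [smul_coe, hent, hent, hent, hent]
  rcases Int.isUnit_iff.mp hru with rfl | rfl <;> norm_num

def pslPerm : PSL(2, ℤ) →* Equiv.Perm IrrReal :=
  QuotientGroup.lift _ (MulAction.toPermHom (SL(2, ℤ)) IrrReal) (by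
    intro g hg
    ext x
    exact congrArg Subtype.val (center_smul_eq hg x))

instance : MulAction (PSL(2, ℤ)) IrrReal where
  smul g x := pslPerm g x
  one_smul x := by
    show pslPerm 1 x = x
    rw [map_one pslPerm]
    rfl
  mul_smul g h x := by
    show pslPerm (g * h) x = pslPerm g (pslPerm h x)
    rw [map_mul pslPerm]
    rfl

lemma psl_mk_smul (g : SL(2, ℤ)) (x : IrrReal) :
    (QuotientGroup.mk g : PSL(2, ℤ)) • x = g • x := rfl

/-- `A = [S]`, the image of `S` in `PSL(2,ℤ)`. -/
def A : PSL(2, ℤ) := QuotientGroup.mk ModularGroup.S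

/-- `B = [S*T]`, the image of `S*T` in `PSL(2,ℤ)`. -/
def B : PSL(2, ℤ) := QuotientGroup.mk (ModularGroup.S * ModularGroup.T)

lemma neg_one_mem_center : (-1 : SL(2, ℤ)) ∈ Subgroup.center (SL(2, ℤ)) := by
  rw [Matrix.SpecialLinearGroup.mem_center_iff]
  refine ⟨-1, by norm_num, ?_⟩
  rw [Matrix.SpecialLinearGroup.coe_neg, Matrix.SpecialLinearGroup.coe_one]
  simp

lemma S_sq : ModularGroup.S ^ 2 = -1 := by
  apply Subtype.ext
  rw [pow_two, Matrix.SpecialLinearGroup.coe_mul, ModularGroup.coe_S, Matrix.SpecialLinearGroup.coe_neg,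
    Matrix.SpecialLinearGroup.coe_one, Matrix.mul_fin_two, Matrix.one_fin_two]
  norm_num

lemma coe_ST : (ModularGroup.S * ModularGroup.T).1 = !![0, -1; 1, 1] := by
  rw [Matrix.SpecialLinearGroup.coe_mul, ModularGroup.coe_S, ModularGroup.coe_T, Matrix.mul_fin_two]
  norm_num

lemma ST_cube : (ModularGroup.S * ModularGroup.T) ^ 3 = -1 := by
  apply Subtype.ext
  rw [pow_succ, pow_two, Matrix.SpecialLinearGroup.coe_mul, Matrix.SpecialLinearGroup.coe_mul, coe_ST,
    Matrix.SpecialLinearGroup.coe_neg, Matrix.SpecialLinearGroup.coe_one, Matrix.mul_fin_two,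
    Matrix.mul_fin_two, Matrix.one_fin_two]
  norm_num

lemma mk_pow (g : SL(2, ℤ)) (n : ℕ) :
    (QuotientGroup.mk (g ^ n) : PSL(2, ℤ)) = (QuotientGroup.mk g : PSL(2, ℤ)) ^ n :=
  map_pow (QuotientGroup.mk' _) g n

lemma A_sq : A ^ 2 = 1 := by
  rw [A, ← mk_pow, S_sq, QuotientGroup.eq_one_iff]
  exact neg_one_mem_center

lemma B_cube : B ^ 3 = 1 := by
  rw [B, ← mk_pow, ST_cube, QuotientGroup.eq_one_iff]
  exact neg_one_mem_center

end PSLAux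

namespace PSLAux

variable {G : Type*} [Group G]

/-- Hom out of `Multiplicative (ZMod n)` determined by an element whose `n`-th power is `1`. -/
def homOfPow (n : ℕ) [NeZero n] (a : G) (h : a ^ n = 1) : Multiplicative (ZMod n) →* G :=
  AddMonoidHom.toMultiplicativeLeft (ZMod.lift n ⟨zmultiplesHom (Additive G) (Additive.ofMul a), by
    show ((n : ℤ) • Additive.ofMul a) = 0
    rw [← ofMul_zpow, zpow_natCast, h]
    rfl⟩)

lemma toMult_lift_apply (n : ℕ) [NeZero n] (F : { f : ℤ →+ Additive G // f n = 0 }) (k : ℤ) :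
    AddMonoidHom.toMultiplicativeLeft (ZMod.lift n F) (Multiplicative.ofAdd ((k : ZMod n)))
      = Additive.toMul (F.1 k) := by
  show Additive.toMul ((ZMod.lift n F) ((k : ZMod n))) = Additive.toMul (F.1 k)
  rw [ZMod.lift_coe]

lemma homOfPow_apply (n : ℕ) [NeZero n] (a : G) (h : a ^ n = 1) (k : ℤ) :
    homOfPow n a h (Multiplicative.ofAdd ((k : ZMod n))) = a ^ k := by
  rw [homOfPow, toMult_lift_apply]
  show Additive.toMul ((k : ℤ) • Additive.ofMul a) = a ^ k
  rw [← ofMul_zpow]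
  rfl

def f2 : Multiplicative (ZMod 2) →* PSL(2, ℤ) := homOfPow 2 A A_sq
def f3 : Multiplicative (ZMod 3) →* PSL(2, ℤ) := homOfPow 3 B B_cube

lemma f2_one : f2 (Multiplicative.ofAdd (1 : ZMod 2)) = A := by
  have := homOfPow_apply 2 A A_sq 1
  rw [Int.cast_one] at this
  rw [f2, this, zpow_one]

lemma f3_one : f3 (Multiplicative.ofAdd (1 : ZMod 3)) = B := by
  have := homOfPow_apply 3 B B_cube 1
  rw [Int.cast_one] at this
  rw [f3, this, zpow_one]

lemma f3_two : f3 (Multiplicative.ofAdd (2 : ZMod 3)) = B * B := by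
  have := homOfPow_apply 3 B B_cube 2
  rw [(by norm_cast : ((2 : ℤ) : ZMod 3) = 2)] at this
  rw [f3, this, zpow_two]

/-- The family `Bool → Type` with values the two cyclic groups. -/
abbrev Hfam : Bool → Type := fun b => Bool.rec (Multiplicative (ZMod 2)) (Multiplicative (ZMod 3)) b

instance HfamGroup : ∀ b, Group (Hfam b) := fun b =>
  Bool.rec (motive := fun b => Group (Hfam b)) inferInstance inferInstance b

def ffam : ∀ b, Hfam b →* PSL(2, ℤ) := fun b =>
  Bool.rec (motive := fun b => Hfam b →* PSL(2, ℤ)) f2 f3 b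

/-- Ping-pong sets: positive and negative irrationals. -/
def Xpp : Bool → Set IrrReal := fun b =>
  Bool.rec (motive := fun _ => Set IrrReal) {x | 0 < (x : ℝ)} {x | (x : ℝ) < 0} b

lemma sqrt2_irr : Irrational (Real.sqrt 2) := irrational_sqrt_two

lemma Xpp_nonempty : ∀ b, (Xpp b).Nonempty := by
  intro b
  cases b
  · exact ⟨⟨Real.sqrt 2, sqrt2_irr⟩, by
      show (0 : ℝ) < Real.sqrt 2
      exact Real.sqrt_pos.mpr (by norm_num)⟩
  · exact ⟨⟨-Real.sqrt 2, sqrt2_irr.neg⟩, by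
      show (-Real.sqrt 2 : ℝ) < 0
      exact neg_lt_zero.mpr (Real.sqrt_pos.mpr (by norm_num))⟩

end PSLAux

namespace PSLAux

open Matrix.SpecialLinearGroup ModularGroup

lemma A_smul (x : IrrReal) : ((A • x : IrrReal) : ℝ) = -1 / x := by
  rw [A, psl_mk_smul, smul_coe, ModularGroup.coe_S]
  norm_num

lemma B_smul (x : IrrReal) : ((B • x : IrrReal) : ℝ) = -1 / ((x : ℝ) + 1) := by
  rw [B, psl_mk_smul, smul_coe, coe_ST]
  norm_num

lemma coe_ST2 : ((ModularGroup.S * ModularGroup.T) * (ModularGroup.S * ModularGroup.T)).1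
    = !![-1, -1; 1, 0] := by
  rw [Matrix.SpecialLinearGroup.coe_mul, coe_ST, Matrix.mul_fin_two]
  norm_num

lemma B2_smul (x : IrrReal) : (((B * B) • x : IrrReal) : ℝ) = (-(x : ℝ) - 1) / x := by
  have hBB : B * B = (QuotientGroup.mk ((ModularGroup.S * ModularGroup.T) *
      (ModularGroup.S * ModularGroup.T)) : PSL(2, ℤ)) := rfl
  rw [hBB, psl_mk_smul, smul_coe, coe_ST2]
  norm_num
  ring_nf

lemma zmod2_cases : ∀ h : Multiplicative (ZMod 2), h ≠ 1 → h = Multiplicative.ofAdd 1 := by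
  decide

lemma zmod3_cases : ∀ h : Multiplicative (ZMod 3), h ≠ 1 →
    h = Multiplicative.ofAdd (1 : ZMod 3) ∨ h = Multiplicative.ofAdd (2 : ZMod 3) := by
  decide

open Pointwise in
lemma pingpong : Pairwise fun i j => ∀ h : Hfam i, h ≠ 1 → ffam i h • Xpp j ⊆ Xpp i := by
  intro i j hij
  cases i <;> cases j <;> try exact absurd rfl hij
  · -- i = false, j = true : A maps negatives to positives
    intro h hne z hz
    have hh : h = Multiplicative.ofAdd (1 : ZMod 2) := zmod2_cases h hne
    rcases Set.mem_smul_set.mp hz with ⟨x, hx, rfl⟩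
    have hxneg : (x : ℝ) < 0 := hx
    show (0 : ℝ) < ((ffam false h • x : IrrReal) : ℝ)
    have : ffam false h = A := by rw [hh]; exact f2_one
    rw [this, A_smul]
    exact div_pos_of_neg_of_neg (by norm_num) hxneg
  · -- i = true, j = false : B, B² map positives to negatives
    intro h hne z hz
    have hh := zmod3_cases h hne
    rcases Set.mem_smul_set.mp hz with ⟨x, hx, rfl⟩
    have hxpos : (0 : ℝ) < x := hx
    show ((ffam true h • x : IrrReal) : ℝ) < 0
    rcases hh with hh | hh
    · have : ffam true h = B := by rw [hh]; exact f3_one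
      rw [this, B_smul]
      exact div_neg_of_neg_of_pos (by norm_num) (by linarith)
    · have : ffam true h = B * B := by rw [hh]; exact f3_two
      rw [this, B2_smul]
      exact div_neg_of_neg_of_pos (by linarith) hxpos

lemma Xdisj : Pairwise (Function.onFun Disjoint Xpp) := by
  intro i j hij
  cases i <;> cases j <;> try exact absurd rfl hij
  · exact Set.disjoint_left.mpr fun x (hx : 0 < (x : ℝ)) (hx' : (x : ℝ) < 0) => absurd hx (not_lt.mpr hx'.le)
  · exact Set.disjoint_left.mpr fun x (hx : (x : ℝ) < 0) (hx' : 0 < (x : ℝ)) => absurd hx' (not_lt.mpr hx.le)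

lemma card3 : (3 : Cardinal) ≤ Cardinal.mk (Hfam true) := by
  rw [Cardinal.mk_fintype,
    show Fintype.card (Hfam true) = 3 by rw [Fintype.card_multiplicative, ZMod.card]]
  norm_num

lemma liftPsl_inj : Function.Injective (Monoid.CoprodI.lift ffam) :=
  Monoid.CoprodI.lift_injective_of_ping_pong ffam (Or.inr ⟨true, card3⟩) Xpp Xpp_nonempty
    Xdisj pingpong

end PSLAux

namespace PSLAux

abbrev CP := Monoid.Coprod (Multiplicative (ZMod 2)) (Multiplicative (ZMod 3))

def toCoprodI : CP →* Monoid.CoprodI Hfam :=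
  Monoid.Coprod.lift (Monoid.CoprodI.of (M := Hfam) (i := false)) (Monoid.CoprodI.of (M := Hfam) (i := true))

def fromCoprodI : Monoid.CoprodI Hfam →* CP :=
  Monoid.CoprodI.lift (fun b =>
    Bool.rec (motive := fun b => Hfam b →* CP) Monoid.Coprod.inl Monoid.Coprod.inr b)

lemma from_to : fromCoprodI.comp toCoprodI = MonoidHom.id CP := by
  apply Monoid.Coprod.hom_ext
  · ext x
    simp [toCoprodI, fromCoprodI, Monoid.Coprod.lift_apply_inl, Monoid.CoprodI.lift_of]
  · ext x
    simp [toCoprodI, fromCoprodI, Monoid.Coprod.lift_apply_inr, Monoid.CoprodI.lift_of]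

lemma toCoprodI_injective : Function.Injective toCoprodI :=
  Function.LeftInverse.injective (g := fromCoprodI) (fun w => by
    have := DFunLike.congr_fun from_to w
    simpa using this)

/-- The canonical map `Z/2 ∗ Z/3 →* PSL(2,ℤ)`. -/
def psi : CP →* PSL(2, ℤ) := (Monoid.CoprodI.lift ffam).comp toCoprodI

lemma psi_injective : Function.Injective psi := liftPsl_inj.comp toCoprodI_injective

lemma psi_inl (x : Multiplicative (ZMod 2)) : psi (Monoid.Coprod.inl x) = f2 x := by
  simp only [psi, toCoprodI, MonoidHom.comp_apply, Monoid.Coprod.lift_apply_inl,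
    Monoid.CoprodI.lift_of]
  rfl

lemma psi_inr (x : Multiplicative (ZMod 3)) : psi (Monoid.Coprod.inr x) = f3 x := by
  simp only [psi, toCoprodI, MonoidHom.comp_apply, Monoid.Coprod.lift_apply_inr,
    Monoid.CoprodI.lift_of]
  rfl

end PSLAux

namespace PSLAux

open Matrix.SpecialLinearGroup ModularGroup Subgroup

lemma sl2_mem_closure (M : SL(2, ℤ)) :
    M ∈ Subgroup.closure ({ModularGroup.S, ModularGroup.T} : Set (SL(2, ℤ))) := by
  set cl := Subgroup.closure ({ModularGroup.S, ModularGroup.T} : Set (SL(2, ℤ))) with hcl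
  have hS : ModularGroup.S ∈ cl := subset_closure (Set.mem_insert _ _)
  have hT : ModularGroup.T ∈ cl := subset_closure (Set.mem_insert_of_mem _ rfl)
  suffices H : ∀ n : ℕ, ∀ M : SL(2, ℤ), (M.1 1 0).natAbs = n → M ∈ cl from H _ M rfl
  intro n
  induction n using Nat.strong_induction_on with
  | _ n ih =>
  intro M hM
  have hdet := sl_det M
  rcases eq_or_ne (M.1 1 0) 0 with hc | hc
  · have had : M.1 0 0 * M.1 1 1 = 1 := by rw [hc] at hdet; linarith
    rcases Int.mul_eq_one_iff_eq_one_or_neg_one.mp had with ⟨ha, hd⟩ | ⟨ha, hd⟩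
    · have hM' : M = ModularGroup.T ^ (M.1 0 1) := by
        apply Subtype.ext
        rw [ModularGroup.coe_T_zpow]
        conv_lhs => rw [Matrix.eta_fin_two M.1]
        rw [ha, hd, hc]
      rw [hM']; exact zpow_mem hT _
    · have hM' : M = ModularGroup.S ^ 2 * ModularGroup.T ^ (-(M.1 0 1)) := by
        rw [S_sq]
        apply Subtype.ext
        rw [Matrix.SpecialLinearGroup.coe_mul, Matrix.SpecialLinearGroup.coe_neg,
          Matrix.SpecialLinearGroup.coe_one, ModularGroup.coe_T_zpow]
        conv_lhs => rw [Matrix.eta_fin_two M.1]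
        rw [ha, hd, hc]
        ext i j
        fin_cases i <;> fin_cases j <;> simp
      rw [hM']; exact mul_mem (pow_mem hS 2) (zpow_mem hT _)
  · set q := M.1 0 0 / M.1 1 0 with hq
    set N := ModularGroup.S * ModularGroup.T ^ (-q) * M with hN
    have hNc : N.1 1 0 = M.1 0 0 % M.1 1 0 := by
      rw [hN, Matrix.SpecialLinearGroup.coe_mul, Matrix.SpecialLinearGroup.coe_mul, ModularGroup.coe_S,
        ModularGroup.coe_T_zpow]
      simp [Matrix.mul_apply, Fin.sum_univ_two]
      rw [Int.emod_def, hq]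
      ring
    have hlt : (N.1 1 0).natAbs < n := by
      rw [hNc, ← hM]
      have h1 : 0 ≤ M.1 0 0 % M.1 1 0 := Int.emod_nonneg _ hc
      have h2 : M.1 0 0 % M.1 1 0 < |M.1 1 0| := Int.emod_lt_abs _ hc
      have := Int.natAbs_lt_natAbs_of_nonneg_of_lt h1 h2
      rwa [Int.natAbs_abs] at this
    have hNcl : N ∈ cl := ih _ hlt N rfl
    have hM' : M = (ModularGroup.S * ModularGroup.T ^ (-q))⁻¹ * N := by rw [hN]; group
    rw [hM']
    exact mul_mem (inv_mem (mul_mem hS (zpow_mem hT _))) hNcl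

lemma psl_closure_top :
    Subgroup.closure ({A, B} : Set (PSL(2, ℤ))) = ⊤ := by
  have hST : Subgroup.closure ({(QuotientGroup.mk ModularGroup.S : PSL(2, ℤ)),
      (QuotientGroup.mk ModularGroup.T : PSL(2, ℤ))} : Set (PSL(2, ℤ))) = ⊤ := by
    have hmap := MonoidHom.map_closure (QuotientGroup.mk' (Subgroup.center (SL(2, ℤ))))
      ({ModularGroup.S, ModularGroup.T} : Set (SL(2, ℤ)))
    have htop : Subgroup.closure ({ModularGroup.S, ModularGroup.T} : Set (SL(2, ℤ))) = ⊤ :=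
      eq_top_iff.mpr fun M _ => sl2_mem_closure M
    rw [htop, Subgroup.map_top_of_surjective _ (QuotientGroup.mk'_surjective _)] at hmap
    rw [Set.image_insert_eq, Set.image_singleton] at hmap
    simpa [QuotientGroup.mk'_apply] using hmap.symm
  rw [eq_top_iff, ← hST]
  apply (Subgroup.closure_le _).mpr
  rintro x (rfl | rfl)
  · exact subset_closure (Set.mem_insert _ _)
  · have hTAB : (QuotientGroup.mk ModularGroup.T : PSL(2, ℤ)) = A⁻¹ * B := by
      rw [A, B, ← QuotientGroup.mk_inv, ← QuotientGroup.mk_mul]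
      congr 1
      group
    show (QuotientGroup.mk ModularGroup.T : PSL(2, ℤ)) ∈ Subgroup.closure {A, B}
    rw [hTAB]
    exact mul_mem (inv_mem (subset_closure (Set.mem_insert _ _)))
      (subset_closure (Set.mem_insert_of_mem _ rfl))

end PSLAux

namespace PSLAux

lemma psi_surjective : Function.Surjective psi := by
  rw [← MonoidHom.range_eq_top]
  rw [eq_top_iff, ← psl_closure_top]
  apply (Subgroup.closure_le _).mpr
  rintro x (rfl | rfl)
  · exact ⟨Monoid.Coprod.inl (Multiplicative.ofAdd (1 : ZMod 2)), by rw [psi_inl, f2_one]⟩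
  · show B ∈ psi.range
    exact ⟨Monoid.Coprod.inr (Multiplicative.ofAdd (1 : ZMod 3)), by rw [psi_inr, f3_one]⟩

/-- `PSL(2,ℤ) ≅ Z/2 ∗ Z/3`. -/
def pslEquivCoprod : PSL(2, ℤ) ≃* CP :=
  (MulEquiv.ofBijective psi ⟨psi_injective, psi_surjective⟩).symm

end PSLAux


end

noncomputable section

namespace PSLCantor

/-- Permuting coordinates of Cantor space, as a monoid hom into homeomorphisms. -/
def permHomeo : Equiv.Perm ℕ →* (Cantor ≃ₜ Cantor) where
  toFun σ :=
    { toEquiv := Equiv.arrowCongr σ (Equiv.refl Bool)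
      continuous_toFun := continuous_pi fun n => continuous_apply _
      continuous_invFun := continuous_pi fun n => continuous_apply _ }
  map_one' := Homeomorph.ext fun x => rfl
  map_mul' σ τ := Homeomorph.ext fun x => rfl

lemma permHomeo_injective : Function.Injective permHomeo := by
  intro σ τ hst
  have H : ∀ (x : Cantor) (n : ℕ), x (σ.symm n) = x (τ.symm n) := fun x n =>
    congrFun (congrArg (fun e : Cantor ≃ₜ Cantor => e x) hst) n
  have hsymm : ∀ n, σ.symm n = τ.symm n := by
    intro n
    have h := H (fun m => decide (m = σ.symm n)) n
    have h2 : τ.symm n = σ.symm n := by simpa using h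
    exact h2.symm
  have : σ.symm = τ.symm := Equiv.ext hsymm
  simpa using congrArg Equiv.symm this

abbrev G2 := Multiplicative (ZMod 2)
abbrev G3 := Multiplicative (ZMod 3)
abbrev CP := Monoid.Coprod G2 G3

instance : Countable CP :=
  letI : Countable (FreeMonoid (G2 ⊕ G3)) := by unfold FreeMonoid; infer_instance
  (Monoid.Coprod.mk_surjective (M := G2) (N := G3)).countable

/-- The embedding of `CP` into homeomorphisms of Cantor space via the regular
representation on coordinates indexed by `CP` pushed to `ℕ`. -/
def bigPhi : CP →* (Cantor ≃ₜ Cantor) :=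
  permHomeo.comp ((Equiv.Perm.viaEmbeddingHom (nonempty_embedding_nat CP).some).comp
    (MulAction.toPermHom CP CP))

lemma bigPhi_injective : Function.Injective bigPhi := by
  refine permHomeo_injective.comp ?_
  refine (Equiv.Perm.viaEmbeddingHom_injective _).comp ?_
  intro a b hab
  exact MulAction.toPerm_injective (α := CP) (β := CP) hab

lemma orderOf_bigPhi_inl : orderOf (bigPhi (Monoid.Coprod.inl (Multiplicative.ofAdd (1 : ZMod 2)))) = 2 := by
  rw [orderOf_injective _ bigPhi_injective,
    orderOf_injective _ Monoid.Coprod.inl_injective,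
    orderOf_ofAdd_eq_addOrderOf, ZMod.addOrderOf_one]

lemma orderOf_bigPhi_inr : orderOf (bigPhi (Monoid.Coprod.inr (Multiplicative.ofAdd (1 : ZMod 3)))) = 3 := by
  rw [orderOf_injective _ bigPhi_injective,
    orderOf_injective _ Monoid.Coprod.inr_injective,
    orderOf_ofAdd_eq_addOrderOf, ZMod.addOrderOf_one]

end PSLCantor

end

/-- `PSL(2,ℤ) ≅ Z/2 * Z/3`, and this group embeds into the homeomorphism
group of the Cantor set: there are homeomorphisms `g, h` of `{0,1}^ℕ` of
orders exactly `2` and `3` such that the canonical map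
`Z/2 * Z/3 → Homeo({0,1}^ℕ)` determined by `g` and `h` is injective. -/
theorem psl2z_embeds_homeo_cantor :
    Nonempty (Matrix.ProjectiveSpecialLinearGroup (Fin 2) ℤ ≃*
      Monoid.Coprod (Multiplicative (ZMod 2)) (Multiplicative (ZMod 3))) ∧
    ∃ g h : Cantor ≃ₜ Cantor, orderOf g = 2 ∧ orderOf h = 3 ∧
      ∃ φ : Monoid.Coprod (Multiplicative (ZMod 2)) (Multiplicative (ZMod 3)) →*
          (Cantor ≃ₜ Cantor),
        φ (Monoid.Coprod.inl (Multiplicative.ofAdd (1 : ZMod 2))) = g ∧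
        φ (Monoid.Coprod.inr (Multiplicative.ofAdd (1 : ZMod 3))) = h ∧
        Function.Injective φ :=
  ⟨⟨PSLAux.pslEquivCoprod⟩,
    PSLCantor.bigPhi (Monoid.Coprod.inl (Multiplicative.ofAdd (1 : ZMod 2))),
    PSLCantor.bigPhi (Monoid.Coprod.inr (Multiplicative.ofAdd (1 : ZMod 3))),
    PSLCantor.orderOf_bigPhi_inl, PSLCantor.orderOf_bigPhi_inr,
    PSLCantor.bigPhi, rfl, rfl, PSLCantor.bigPhi_injective⟩
end
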